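/- arXiv:1210.3231 — 4 statements merged into one kernel-verified Lean document; each statement's English description precedes it below -/
import Mathlib

section
/- Let T be a ℂ-linear map defined on the space of multi-affine complex polynomials in z_1,…,z_d with values in ℂ[z_1,…,z_d], and define its algebraic symbol G_T ∈ ℂ[z_1,…,z_d,w_1,…,w_d] by G_T(z,w) := Σ_{S ⊆ {1,…,d}} (Π_{j ∉ S} w_j) · T(Π_{j ∈ S} z_j). If G_T is a stable polynomial in the 2d variables z_1,…,z_d,w_1,…,w_d, then for every stable multi-affine polynomial f ∈ ℂ[z_1,…,z_d], the polynomial T(f) is stable or identically zero. -/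
open MvPolynomial Filter

namespace BB

variable {σ : Type*} [Fintype σ] [DecidableEq σ]

def Stable (P : MvPolynomial σ ℂ) : Prop :=
  ∀ x : σ → ℂ, (∀ i, 0 < (x i).im) → MvPolynomial.eval x P ≠ 0

lemma eval_line (x0 u : σ → ℂ) (R : MvPolynomial σ ℂ) (t : ℂ) :
    Polynomial.eval t
      ((MvPolynomial.aeval fun j => Polynomial.C (x0 j) + Polynomial.C (u j) * Polynomial.X) R)
      = MvPolynomial.eval (fun j => x0 j + t * u j) R := by
  rw [← Polynomial.coe_aeval_eq_eval, MvPolynomial.comp_aeval_apply]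
  have : (fun j => (Polynomial.aeval t) (Polynomial.C (x0 j) + Polynomial.C (u j) * Polynomial.X))
      = fun j => x0 j + t * u j := by
    funext j
    simp only [map_add, map_mul, Polynomial.aeval_C, Polynomial.aeval_X, Algebra.algebraMap_self, RingHom.id_apply]
    ring
  rw [this, show (MvPolynomial.aeval fun j => x0 j + t * u j : MvPolynomial σ ℂ →ₐ[ℂ] ℂ) R
      = MvPolynomial.eval (fun j => x0 j + t * u j) R from by
    rw [← MvPolynomial.coe_aeval_eq_eval]; rfl]


theorem hurwitz (F : Finset (σ →₀ ℕ)) (P : ℕ → MvPolynomial σ ℂ) (Q : MvPolynomial σ ℂ)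
    (hst : ∀ n, Stable (P n)) (hsupp : ∀ n, (P n).support ⊆ F)
    (hconv : ∀ μ, Tendsto (fun n => coeff μ (P n)) atTop (nhds (coeff μ Q))) :
    Q = 0 ∨ Stable Q := by
  by_contra hcon
  push_neg at hcon
  obtain ⟨hQ0, hns⟩ := hcon
  unfold Stable at hns
  push_neg at hns
  obtain ⟨x0, hx0, hQx0⟩ := hns
  -- support of Q is inside F
  have hsuppQ : Q.support ⊆ F := by
    intro μ hμ
    by_contra hμF
    have h0 : ∀ n, coeff μ (P n) = 0 := fun n => by
      by_contra h; exact hμF (hsupp n (mem_support_iff.2 h))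
    have : coeff μ Q = 0 := by
      have := hconv μ
      simp only [h0] at this
      exact (tendsto_nhds_unique tendsto_const_nhds this).symm
    exact mem_support_iff.1 hμ this
  -- a point where Q is nonzero
  obtain ⟨ξ, hξ⟩ : ∃ ξ : σ → ℂ, MvPolynomial.eval ξ Q ≠ 0 := by
    by_contra h; push_neg at h
    exact hQ0 (MvPolynomial.funext fun x => by simp [h x])
  set u : σ → ℂ := fun j => ξ j - x0 j with hu
  set y : ℂ → σ → ℂ := fun t j => x0 j + t * u j with hy
  -- radius r₁ of a disc staying in the upper half space
  obtain ⟨r₁, hr₁pos, hr₁⟩ : ∃ r₁ > (0:ℝ), ∀ t : ℂ, ‖t‖ ≤ r₁ → ∀ j, 0 < ((y t j).im) := by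
    have hev : ∀ᶠ t : ℂ in nhds 0, ∀ j, 0 < ((y t j).im) := by
      rw [eventually_all]
      intro j
      have hc : Continuous fun t : ℂ => (y t j).im := by
        fun_prop
      have ht0 : Tendsto (fun t : ℂ => (y t j).im) (nhds 0) (nhds ((x0 j).im)) := by
        simpa [hy] using hc.tendsto 0
      exact ht0.eventually (eventually_gt_nhds (hx0 j))
    rw [Metric.eventually_nhds_iff] at hev
    obtain ⟨ε, hε, h⟩ := hev
    exact ⟨ε/2, by linarith, fun t ht => h (by simpa [Complex.dist_eq] using lt_of_le_of_lt ht (by linarith))⟩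
  -- the restriction of Q to the line
  set line : σ → Polynomial ℂ := fun j => Polynomial.C (x0 j) + Polynomial.C (u j) * Polynomial.X with hline
  set q : Polynomial ℂ := MvPolynomial.aeval line Q with hqdef
  have hqeval : ∀ t : ℂ, q.eval t = MvPolynomial.eval (y t) Q := fun t => eval_line x0 u Q t
  have hy0 : y 0 = x0 := by funext j; simp [hy]
  have hy1 : y 1 = ξ := by funext j; simp [hy, hu]
  have hq0 : q.eval 0 = 0 := by rw [hqeval, hy0, hQx0]
  have hq1 : q.eval 1 ≠ 0 := by rw [hqeval, hy1]; exact hξ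
  have hqne : q ≠ 0 := fun h => hq1 (by simp [h])
  -- choose a good radius r
  obtain ⟨r, hrr⟩ : ∃ r : ℝ, (0 < r ∧ r < r₁) ∧ ∀ t : ℂ, ‖t‖ = r → q.eval t ≠ 0 := by
    have hfin : Set.Finite ((fun z : ℂ => ‖z‖) '' {t | q.IsRoot t}) :=
      (Polynomial.finite_setOf_isRoot hqne).image _
    have hinf : Set.Infinite (Set.Ioo (0:ℝ) r₁ \ ((fun z : ℂ => ‖z‖) '' {t | q.IsRoot t})) :=
      (Set.Ioo_infinite hr₁pos).diff hfin
    obtain ⟨r, hr⟩ := hinf.nonempty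
    refine ⟨r, ⟨hr.1.1, hr.1.2⟩, fun t ht hroot => hr.2 ⟨t, hroot, ht⟩⟩
  obtain ⟨⟨hrpos, hrlt⟩, hrq⟩ := hrr
  -- min of ‖q‖ on the sphere
  obtain ⟨tmin, htmin, hmin⟩ :=
    (isCompact_sphere (0:ℂ) r).exists_isMinOn
      (NormedSpace.sphere_nonempty.2 hrpos.le)
      (Continuous.continuousOn (by continuity : Continuous fun t : ℂ => ‖q.eval t‖))
  set m : ℝ := ‖q.eval tmin‖ with hm
  have hmpos : 0 < m := by
    have : ‖tmin‖ = r := by simpa [Complex.dist_eq] using htmin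
    exact norm_pos_iff.2 (hrq tmin this)
  have hminle : ∀ t : ℂ, ‖t‖ = r → m ≤ ‖q.eval t‖ := by
    intro t ht
    exact hmin (by simpa [Complex.dist_eq] using ht)
  -- the uniform bound
  set M : (σ →₀ ℕ) → ℝ := fun μ => ∏ j, (‖x0 j‖ + r * ‖u j‖) ^ μ j with hM
  set ε : ℕ → ℝ := fun n => ∑ μ ∈ F, ‖coeff μ (P n) - coeff μ Q‖ * M μ with hε
  have hbound : ∀ n, ∀ t : ℂ, ‖t‖ ≤ r →
      ‖MvPolynomial.eval (y t) (P n) - MvPolynomial.eval (y t) Q‖ ≤ ε n := by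
    intro n t ht
    have h1 : MvPolynomial.eval (y t) (P n) - MvPolynomial.eval (y t) Q
        = ∑ μ ∈ F, (coeff μ (P n) - coeff μ Q) * ∏ j, (y t j) ^ μ j := by
      rw [← map_sub]
      rw [MvPolynomial.eval_eq']
      refine Finset.sum_subset ?_ ?_
      · intro μ hμ
        rcases Finset.mem_union.1 (MvPolynomial.support_sub σ (P n) Q hμ) with h | h
        · exact hsupp n h
        · exact hsuppQ h
      · intro μ _ hμ
        simp [MvPolynomial.notMem_support_iff.1 hμ]
    rw [h1]
    refine (norm_sum_le _ _).trans (Finset.sum_le_sum ?_)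
    intro μ _
    rw [norm_mul]
    refine mul_le_mul_of_nonneg_left ?_ (norm_nonneg _)
    rw [norm_prod]
    refine Finset.prod_le_prod (fun j _ => by positivity) (fun j _ => ?_)
    rw [norm_pow]
    refine pow_le_pow_left₀ (norm_nonneg _) ?_ _
    calc ‖y t j‖ ≤ ‖x0 j‖ + ‖t * u j‖ := norm_add_le _ _
      _ ≤ ‖x0 j‖ + r * ‖u j‖ := by
          rw [norm_mul]
          exact add_le_add (le_refl _) (mul_le_mul_of_nonneg_right ht (norm_nonneg _))
  have hεtend : Tendsto ε atTop (nhds 0) := by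
    have : Tendsto (fun n => ∑ μ ∈ F, ‖coeff μ (P n) - coeff μ Q‖ * M μ) atTop
        (nhds (∑ μ ∈ F, (0:ℝ))) := by
      refine tendsto_finset_sum _ (fun μ _ => ?_)
      have h := ((hconv μ).sub_const (coeff μ Q)).norm
      simpa using h.mul_const (M μ)
    simpa using this
  -- choose n
  have hev2 : ∀ᶠ n in atTop, ε n < m/2 := hεtend.eventually (eventually_lt_nhds (by linarith))
  obtain ⟨n, hn⟩ := hev2.exists
  -- the polynomial restriction of P n to the line
  set g : Polynomial ℂ := MvPolynomial.aeval line (P n) with hgdef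
  have hgeval : ∀ t : ℂ, g.eval t = MvPolynomial.eval (y t) (P n) := fun t => eval_line x0 u (P n) t
  have hgne : ∀ t : ℂ, t ∈ Metric.closedBall (0:ℂ) r → g.eval t ≠ 0 := by
    intro t htmem
    rw [hgeval]
    refine hst n (y t) (hr₁ t ?_)
    have : ‖t‖ ≤ r := by simpa [Complex.dist_eq] using htmem
    linarith
  have hgsphere : ∀ t : ℂ, ‖t‖ = r → m/2 ≤ ‖g.eval t‖ := by
    intro t ht
    have h1 := hbound n t ht.le
    rw [← hgeval t, ← hqeval t] at h1
    have h2 := hminle t ht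
    have h3 := norm_sub_norm_le (Polynomial.eval t q) (Polynomial.eval t q - Polynomial.eval t g)
    have h4 : ‖Polynomial.eval t q - Polynomial.eval t g‖ ≤ ε n := by
      rw [norm_sub_rev]; exact h1
    simp only [sub_sub_cancel] at h3
    linarith
  -- maximum modulus principle applied to 1/g on the ball
  have hmain : ‖(g.eval 0)⁻¹‖ ≤ (m/2)⁻¹ := by
    refine Complex.norm_le_of_forall_mem_frontier_norm_le
      (f := fun t : ℂ => (Polynomial.eval t g)⁻¹) (U := Metric.ball (0:ℂ) r)
      Metric.isBounded_ball ?_ ?_ ?_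
    · constructor
      · intro t htmem
        refine DifferentiableAt.differentiableWithinAt ?_
        exact (g.differentiable.differentiableAt).inv
          (hgne t (Metric.ball_subset_closedBall htmem))
      · rw [closure_ball _ hrpos.ne']
        intro t htmem
        refine ContinuousAt.continuousWithinAt ?_
        exact ((g.differentiable.differentiableAt).inv (hgne t htmem)).continuousAt
    · intro t htmem
      rw [frontier_ball _ hrpos.ne'] at htmem
      have ht : ‖t‖ = r := by simpa [Complex.dist_eq] using htmem
      rw [norm_inv]
      exact inv_anti₀ (by linarith) (hgsphere t ht)
    · rw [closure_ball _ hrpos.ne']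
      exact Metric.mem_closedBall_self hrpos.le
  have hg0 : g.eval 0 ≠ 0 := hgne 0 (Metric.mem_closedBall_self hrpos.le)
  have h3 : m/2 ≤ ‖g.eval 0‖ := by
    rw [norm_inv] at hmain
    have := (inv_le_inv₀ (norm_pos_iff.2 hg0) (by linarith : (0:ℝ) < m/2)).1 hmain
    linarith
  have h4 : ‖g.eval 0‖ ≤ ε n := by
    have := hbound n 0 (by simp [hrpos.le])
    rw [hy0, hQx0] at this
    simpa [hgeval 0, hy0] using this
  linarith
/-- `P` does not (semantically) depend on the variable `i`. -/
def Indep (i : σ) (P : MvPolynomial σ ℂ) : Prop :=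
  ∀ (x : σ → ℂ) (s : ℂ),
    MvPolynomial.eval (Function.update x i s) P = MvPolynomial.eval x P

lemma Indep.add {i : σ} {P Q : MvPolynomial σ ℂ} (hP : Indep i P) (hQ : Indep i Q) :
    Indep i (P + Q) := fun x s => by simp [hP x s, hQ x s]

lemma Indep.mul {i : σ} {P Q : MvPolynomial σ ℂ} (hP : Indep i P) (hQ : Indep i Q) :
    Indep i (P * Q) := fun x s => by simp [hP x s, hQ x s]

lemma Indep.neg {i : σ} {P : MvPolynomial σ ℂ} (hP : Indep i P) : Indep i (-P) :=
  fun x s => by simp [hP x s]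

lemma Indep.smul {i : σ} {P : MvPolynomial σ ℂ} (c : ℂ) (hP : Indep i P) : Indep i (c • P) :=
  fun x s => by simp [MvPolynomial.smul_eq_C_mul, hP x s]

lemma Indep.zero {i : σ} : Indep i (0 : MvPolynomial σ ℂ) := fun x s => by simp

lemma Indep.C {i : σ} (c : ℂ) : Indep i (MvPolynomial.C c : MvPolynomial σ ℂ) := fun x s => by simp

lemma Indep.sum {i : σ} {α : Type*} (s : Finset α) (f : α → MvPolynomial σ ℂ)
    (h : ∀ j ∈ s, Indep i (f j)) : Indep i (∑ j ∈ s, f j) := fun x t => by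
  rw [map_sum, map_sum]
  exact Finset.sum_congr rfl fun j hj => h j hj x t

lemma Indep.prod {i : σ} {α : Type*} (s : Finset α) (f : α → MvPolynomial σ ℂ)
    (h : ∀ j ∈ s, Indep i (f j)) : Indep i (∏ j ∈ s, f j) := fun x t => by
  rw [map_prod, map_prod]
  exact Finset.prod_congr rfl fun j hj => h j hj x t

lemma Indep.X {i j : σ} (h : j ≠ i) : Indep i (MvPolynomial.X j : MvPolynomial σ ℂ) :=
  fun x s => by simp [Function.update_of_ne h]

/-- points of the upper half space stay there after an update with upper half plane value -/
lemma update_im {x : σ → ℂ} {i : σ} {s : ℂ} (hx : ∀ j, 0 < (x j).im) (hs : 0 < s.im) :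
    ∀ j, 0 < ((Function.update x i s) j).im := by
  intro j
  rcases eq_or_ne j i with rfl | h
  · simpa using hs
  · simpa [Function.update_of_ne h] using hx j

/-- Gauss–Lucas for a genuine quadratic. -/
lemma quad_deriv_ne (a b c u0 : ℂ) (hc : c ≠ 0)
    (h : ∀ u : ℂ, 0 < u.im → a + b * u + c * u ^ 2 ≠ 0) (hu0 : 0 < u0.im) :
    b + 2 * c * u0 ≠ 0 := by
  obtain ⟨s, hs⟩ := IsAlgClosed.exists_pow_nat_eq (k := ℂ) (b ^ 2 - 4 * a * c) zero_lt_two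
  set r : ℂ := (-b + s) / (2 * c) with hr
  set r' : ℂ := (-b - s) / (2 * c) with hr'
  have h1' : c * (r + r') = -b := by
    rw [hr, hr']; field_simp; ring
  have h2' : c * (r * r') = a := by
    rw [hr, hr']
    have h4 : (2 * c) * (2 * c) ≠ 0 := by
      apply mul_ne_zero <;> exact mul_ne_zero two_ne_zero hc
    field_simp
    linear_combination (-1) * hs
  have key : ∀ u : ℂ, a + b * u + c * u ^ 2 = c * (u - r) * (u - r') := by
    intro u
    have expand : c * (u - r) * (u - r') = c * u ^ 2 - (c * (r + r')) * u + c * (r * r') := by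
      ring
    rw [expand, h1', h2']
    ring
  have him : r.im ≤ 0 ∧ r'.im ≤ 0 := by
    constructor
    · by_contra hpos
      push_neg at hpos
      exact h r hpos (by rw [key r]; ring)
    · by_contra hpos
      push_neg at hpos
      exact h r' hpos (by rw [key r']; ring)
  have hb : b + 2 * c * u0 = c * (2 * u0 - (r + r')) := by linear_combination h1'
  rw [hb]
  apply mul_ne_zero hc
  intro h0
  have h2u : (2:ℂ) * u0 - (r + r') = (u0 + u0) - (r + r') := by ring
  rw [h2u] at h0
  have him0 := congrArg Complex.im h0
  simp only [Complex.sub_im, Complex.add_im, Complex.zero_im] at him0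
  have := him.1; have := him.2
  linarith

/-- Top coefficient of a linear (in `X i`) stable polynomial. -/
lemma top_coeff_linear (i : σ) (q0 q1 : MvPolynomial σ ℂ)
    (h0 : Indep i q0) (h1 : Indep i q1)
    (hs : Stable (q0 + q1 * X i)) : q1 = 0 ∨ Stable q1 := by
  have htend : Tendsto (fun n : ℕ => (Complex.I * ((n : ℂ) + 1))⁻¹) atTop (nhds 0) := by
    rw [tendsto_zero_iff_norm_tendsto_zero]
    have : ∀ n : ℕ, ‖(Complex.I * ((n : ℂ) + 1))⁻¹‖ = 1 / ((n : ℝ) + 1) := by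
      intro n
      rw [norm_inv, norm_mul, Complex.norm_I, one_mul, one_div]
      congr 1
      have : ((n : ℂ) + 1) = (((n : ℕ) + 1 : ℕ) : ℂ) := by push_cast; ring
      rw [this, Complex.norm_natCast]
      push_cast; ring
    simp only [this]
    exact tendsto_one_div_add_atTop_nhds_zero_nat
  have key := hurwitz (q0.support ∪ q1.support)
    (fun n => q1 + (Complex.I * ((n : ℂ) + 1))⁻¹ • q0) q1 ?_ ?_ ?_
  · exact key
  · intro n x hx
    set s : ℂ := Complex.I * ((n : ℂ) + 1) with hsdef
    have hsim : 0 < s.im := by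
      simp [hsdef, Complex.mul_im]
      positivity
    have hsne : s ≠ 0 := by
      intro h'
      rw [h'] at hsim; simp at hsim
    have h := hs (Function.update x i s) (update_im hx hsim)
    have hev : MvPolynomial.eval (Function.update x i s) (q0 + q1 * X i)
        = MvPolynomial.eval x q0 + MvPolynomial.eval x q1 * s := by
      simp [h0 x s, h1 x s, Function.update_self]
    rw [hev] at h
    have : MvPolynomial.eval x (q1 + (Complex.I * ((n : ℂ) + 1))⁻¹ • q0)
        = s⁻¹ * (MvPolynomial.eval x q0 + MvPolynomial.eval x q1 * s) := by
      rw [map_add, MvPolynomial.smul_eq_C_mul, map_mul, MvPolynomial.eval_C, ← hsdef]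
      field_simp
      ring
    rw [this]
    exact mul_ne_zero (inv_ne_zero hsne) h
  · intro n
    refine (MvPolynomial.support_add).trans ?_
    rw [Finset.union_comm]
    exact Finset.union_subset_union MvPolynomial.support_smul (fun μ h => h)
  · intro μ
    simp only [MvPolynomial.coeff_add, MvPolynomial.coeff_smul, smul_eq_mul]
    have := (htend.mul_const (MvPolynomial.coeff μ q0)).const_add (MvPolynomial.coeff μ q1)
    simpa using this

/-- Top coefficient of a quadratic (in `X i`) stable polynomial. -/
lemma top_coeff_quad (i : σ) (q0 q1 q2 : MvPolynomial σ ℂ)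
    (h0 : Indep i q0) (h1 : Indep i q1) (h2 : Indep i q2)
    (hs : Stable (q0 + q1 * X i + q2 * (X i) ^ 2)) : q2 = 0 ∨ Stable q2 := by
  have htend : Tendsto (fun n : ℕ => (Complex.I * ((n : ℂ) + 1))⁻¹) atTop (nhds 0) := by
    rw [tendsto_zero_iff_norm_tendsto_zero]
    have : ∀ n : ℕ, ‖(Complex.I * ((n : ℂ) + 1))⁻¹‖ = 1 / ((n : ℝ) + 1) := by
      intro n
      rw [norm_inv, norm_mul, Complex.norm_I, one_mul, one_div]
      congr 1
      have : ((n : ℂ) + 1) = (((n : ℕ) + 1 : ℕ) : ℂ) := by push_cast; ring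
      rw [this, Complex.norm_natCast]
      push_cast; ring
    simp only [this]
    exact tendsto_one_div_add_atTop_nhds_zero_nat
  have key := hurwitz ((q0.support ∪ q1.support) ∪ q2.support)
    (fun n => q2 + (Complex.I * ((n : ℂ) + 1))⁻¹ • q1
      + ((Complex.I * ((n : ℂ) + 1))⁻¹) ^ 2 • q0) q2 ?_ ?_ ?_
  · exact key
  · intro n x hx
    set s : ℂ := Complex.I * ((n : ℂ) + 1) with hsdef
    have hsim : 0 < s.im := by
      simp [hsdef, Complex.mul_im]
      positivity
    have hsne : s ≠ 0 := by
      intro h'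
      rw [h'] at hsim; simp at hsim
    have h := hs (Function.update x i s) (update_im hx hsim)
    have hev : MvPolynomial.eval (Function.update x i s) (q0 + q1 * X i + q2 * (X i) ^ 2)
        = MvPolynomial.eval x q0 + MvPolynomial.eval x q1 * s
          + MvPolynomial.eval x q2 * s ^ 2 := by
      simp [h0 x s, h1 x s, h2 x s, Function.update_self]
    rw [hev] at h
    have : MvPolynomial.eval x (q2 + (Complex.I * ((n : ℂ) + 1))⁻¹ • q1
          + ((Complex.I * ((n : ℂ) + 1))⁻¹) ^ 2 • q0)
        = (s ^ 2)⁻¹ * (MvPolynomial.eval x q0 + MvPolynomial.eval x q1 * s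
          + MvPolynomial.eval x q2 * s ^ 2) := by
      rw [map_add, map_add, MvPolynomial.smul_eq_C_mul, MvPolynomial.smul_eq_C_mul,
        map_mul, map_mul, MvPolynomial.eval_C, MvPolynomial.eval_C, ← hsdef]
      field_simp
      ring
    rw [this]
    exact mul_ne_zero (inv_ne_zero (pow_ne_zero 2 hsne)) h
  · intro n
    refine (MvPolynomial.support_add).trans ?_
    refine Finset.union_subset ((MvPolynomial.support_add).trans ?_) ?_
    · refine Finset.union_subset ?_ ?_
      · intro μ h; exact Finset.mem_union_right _ h
      · intro μ h
        exact Finset.mem_union_left _ (Finset.mem_union_right _ (MvPolynomial.support_smul h))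
    · intro μ h
      exact Finset.mem_union_left _ (Finset.mem_union_left _ (MvPolynomial.support_smul h))
  · intro μ
    simp only [MvPolynomial.coeff_add, MvPolynomial.coeff_smul, smul_eq_mul]
    have h1t := htend.mul_const (MvPolynomial.coeff μ q1)
    have h0t := ((htend.pow 2).mul_const (MvPolynomial.coeff μ q0))
    have := ((h1t.const_add (MvPolynomial.coeff μ q2)).add h0t)
    simpa using this

/-- Bottom coefficient of a linear (in `X i`) stable polynomial. -/
lemma bot_coeff_linear (i : σ) (q0 q1 : MvPolynomial σ ℂ)
    (h0 : Indep i q0) (h1 : Indep i q1)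
    (hs : Stable (q0 + q1 * X i)) : q0 = 0 ∨ Stable q0 := by
  have htend : Tendsto (fun n : ℕ => Complex.I * ((n : ℂ) + 1)⁻¹) atTop (nhds 0) := by
    rw [tendsto_zero_iff_norm_tendsto_zero]
    have : ∀ n : ℕ, ‖Complex.I * ((n : ℂ) + 1)⁻¹‖ = 1 / ((n : ℝ) + 1) := by
      intro n
      rw [norm_mul, Complex.norm_I, one_mul, norm_inv, one_div]
      congr 1
      have : ((n : ℂ) + 1) = (((n : ℕ) + 1 : ℕ) : ℂ) := by push_cast; ring
      rw [this, Complex.norm_natCast]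
      push_cast; ring
    simp only [this]
    exact tendsto_one_div_add_atTop_nhds_zero_nat
  have key := hurwitz (q0.support ∪ q1.support)
    (fun n => q0 + (Complex.I * ((n : ℂ) + 1)⁻¹) • q1) q0 ?_ ?_ ?_
  · exact key
  · intro n x hx
    set s : ℂ := Complex.I * ((n : ℂ) + 1)⁻¹ with hsdef
    have hcast : ((n : ℂ) + 1)⁻¹ = ((((n:ℝ) + 1)⁻¹ : ℝ) : ℂ) := by
      push_cast; ring
    have hsim : 0 < s.im := by
      rw [hsdef, hcast]
      simp [Complex.mul_im]
      exact div_pos (by positivity) (Complex.normSq_pos.2 (Nat.cast_add_one_ne_zero n))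
    have h := hs (Function.update x i s) (update_im hx hsim)
    have hev : MvPolynomial.eval (Function.update x i s) (q0 + q1 * X i)
        = MvPolynomial.eval x q0 + MvPolynomial.eval x q1 * s := by
      simp [h0 x s, h1 x s, Function.update_self]
    rw [hev] at h
    have : MvPolynomial.eval x (q0 + (Complex.I * ((n : ℂ) + 1)⁻¹) • q1)
        = MvPolynomial.eval x q0 + MvPolynomial.eval x q1 * s := by
      rw [map_add, MvPolynomial.smul_eq_C_mul, map_mul, MvPolynomial.eval_C, ← hsdef]
      ring
    rw [this]
    exact h
  · intro n
    refine (MvPolynomial.support_add).trans ?_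
    exact Finset.union_subset_union (fun μ h => h) MvPolynomial.support_smul
  · intro μ
    simp only [MvPolynomial.coeff_add, MvPolynomial.coeff_smul, smul_eq_mul]
    have := (htend.mul_const (MvPolynomial.coeff μ q1)).const_add (MvPolynomial.coeff μ q0)
    simpa using this

/-- The derivative step: from a stable quadratic to its derivative. -/
lemma deriv_step (i : σ) (q0 q1 q2 : MvPolynomial σ ℂ)
    (h0 : Indep i q0) (h1 : Indep i q1) (h2 : Indep i q2)
    (hs : Stable (q0 + q1 * X i + q2 * (X i) ^ 2)) :
    Stable (q1 + ((2:ℂ) • q2) * X i) ∨ (q1 = 0 ∧ q2 = 0) := by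
  rcases eq_or_ne q2 0 with rfl | hq2
  · have hs' : Stable (q0 + q1 * X i) := by
      intro x hx
      have := hs x hx
      simpa using this
    rw [smul_zero, zero_mul, add_zero]
    rcases top_coeff_linear i q0 q1 h0 h1 hs' with h | h
    · exact Or.inr ⟨h, rfl⟩
    · exact Or.inl h
  · have hq2s : Stable q2 := by
      rcases top_coeff_quad i q0 q1 q2 h0 h1 h2 hs with h | h
      · exact absurd h hq2
      · exact h
    left
    intro x hx
    have hx0 : (0:ℝ) < (x i).im := hx i
    have hcne : MvPolynomial.eval x q2 ≠ 0 := hq2s x hx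
    have hpt : ∀ u : ℂ, 0 < u.im →
        MvPolynomial.eval x q0 + MvPolynomial.eval x q1 * u
          + MvPolynomial.eval x q2 * u ^ 2 ≠ 0 := by
      intro u hu
      have h := hs (Function.update x i u) (update_im hx hu)
      have hev : MvPolynomial.eval (Function.update x i u) (q0 + q1 * X i + q2 * (X i) ^ 2)
          = MvPolynomial.eval x q0 + MvPolynomial.eval x q1 * u
            + MvPolynomial.eval x q2 * u ^ 2 := by
        simp [h0 x u, h1 x u, h2 x u, Function.update_self]
      rwa [hev] at h
    have := quad_deriv_ne (MvPolynomial.eval x q0) (MvPolynomial.eval x q1)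
      (MvPolynomial.eval x q2) (x i) hcne
      hpt hx0
    intro hcon
    apply this
    rw [map_add, map_mul, MvPolynomial.eval_X, MvPolynomial.smul_eq_C_mul, map_mul,
      MvPolynomial.eval_C] at hcon
    linear_combination hcon

/-- The key contraction lemma. -/
lemma contraction (iw iv : σ) (hne : iw ≠ iv) (A B C D : MvPolynomial σ ℂ)
    (hAw : Indep iw A) (hAv : Indep iv A) (hBw : Indep iw B) (hBv : Indep iv B)
    (hCw : Indep iw C) (hCv : Indep iv C) (hDw : Indep iw D) (hDv : Indep iv D)
    (hs : Stable (A + B * X iw + C * X iv + D * (X iw * X iv))) :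
    Stable (B + C) ∨ B + C = 0 := by
  -- the double-reversed diagonal quadratic is stable
  have hQ : Stable (D + (-(B + C)) * X iw + A * (X iw) ^ 2) := by
    intro x hx
    set w : ℂ := x iw with hw
    have hwim : 0 < w.im := hx iw
    have hwne : w ≠ 0 := by
      intro h'
      rw [h'] at hwim; simp at hwim
    set u : ℂ := -w⁻¹ with hu
    have huim : 0 < u.im := by
      rw [hu, Complex.neg_im, Complex.inv_im]
      have : Complex.normSq w > 0 := Complex.normSq_pos.2 hwne
      rw [neg_div, neg_neg]
      positivity
    set x' : σ → ℂ := Function.update (Function.update x iw u) iv u with hx'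
    have hx'mem : ∀ j, 0 < (x' j).im := update_im (update_im hx huim) huim
    have h := hs x' hx'mem
    have hx'w : x' iw = u := by
      rw [hx', Function.update_of_ne hne, Function.update_self]
    have hx'v : x' iv = u := Function.update_self _ _ _
    have hevA : MvPolynomial.eval x' A = MvPolynomial.eval x A := by
      rw [hx', hAv _ u, hAw _ u]
    have hevB : MvPolynomial.eval x' B = MvPolynomial.eval x B := by
      rw [hx', hBv _ u, hBw _ u]
    have hevC : MvPolynomial.eval x' C = MvPolynomial.eval x C := by
      rw [hx', hCv _ u, hCw _ u]
    have hevD : MvPolynomial.eval x' D = MvPolynomial.eval x D := by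
      rw [hx', hDv _ u, hDw _ u]
    have hev : MvPolynomial.eval x' (A + B * X iw + C * X iv + D * (X iw * X iv))
        = MvPolynomial.eval x A + MvPolynomial.eval x B * u
          + MvPolynomial.eval x C * u + MvPolynomial.eval x D * (u * u) := by
      simp only [map_add, map_mul, MvPolynomial.eval_X, hx'w, hx'v, hevA, hevB, hevC, hevD]
    rw [hev] at h
    have hgoal : MvPolynomial.eval x (D + (-(B + C)) * X iw + A * (X iw) ^ 2)
        = w ^ 2 * (MvPolynomial.eval x A + MvPolynomial.eval x B * u
          + MvPolynomial.eval x C * u + MvPolynomial.eval x D * (u * u)) := by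
      simp only [map_add, map_mul, map_neg, MvPolynomial.eval_X, map_pow, ← hw]
      rw [hu]
      field_simp
      ring
    rw [hgoal]
    exact mul_ne_zero (pow_ne_zero 2 hwne) h
  have hstep := deriv_step iw D (-(B + C)) A hDw ((hBw.add hCw).neg) hAw hQ
  rcases hstep with h | ⟨h1, _⟩
  · have hbc := bot_coeff_linear iw (-(B + C)) ((2:ℂ) • A)
      ((hBw.add hCw).neg) (hAw.smul 2) h
    rcases hbc with h' | h'
    · right
      exact neg_eq_zero.1 h'
    · left
      intro x hx
      have := h' x hx
      rw [map_neg, neg_ne_zero] at this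
      exact this
  · right
    exact neg_eq_zero.1 h1

section Main
variable {d : ℕ}

def in0 : Fin d → (Fin d ⊕ (Fin d ⊕ Fin d)) := Sum.inl
def in1 : Fin d → (Fin d ⊕ (Fin d ⊕ Fin d)) := fun j => Sum.inr (Sum.inl j)
def in2 : Fin d → (Fin d ⊕ (Fin d ⊕ Fin d)) := fun j => Sum.inr (Sum.inr j)

def proc (d k : ℕ) : Finset (Fin d) := Finset.univ.filter fun j => (j : ℕ) < k

variable (c : Finset (Fin d) → MvPolynomial (Fin d) ℂ) (a : Finset (Fin d) → ℂ)

/-- the general term of the contracted polynomials -/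
noncomputable def term (k : ℕ) (p : Finset (Fin d) × Finset (Fin d)) :
    MvPolynomial (Fin d ⊕ (Fin d ⊕ Fin d)) ℂ :=
  rename in0 (c p.1) * MvPolynomial.C (a p.2) * (∏ j ∈ p.1ᶜ \ proc d k, X (in1 j))
    * (∏ j ∈ p.2 \ proc d k, X (in2 j))

/-- the `k`-th stage contraction -/
noncomputable def RR (k : ℕ) : MvPolynomial (Fin d ⊕ (Fin d ⊕ Fin d)) ℂ :=
  ∑ p ∈ Finset.univ.filter
      (fun p : Finset (Fin d) × Finset (Fin d) => p.1 ∩ proc d k = p.2 ∩ proc d k),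
    term c a k p

noncomputable def PA (k : ℕ) (tk : Fin d) : MvPolynomial (Fin d ⊕ (Fin d ⊕ Fin d)) ℂ :=
  ∑ p ∈ Finset.univ.filter
      (fun p : Finset (Fin d) × Finset (Fin d) =>
        (p.1 ∩ proc d k = p.2 ∩ proc d k ∧ tk ∈ p.1) ∧ tk ∉ p.2),
    term c a (k+1) p

noncomputable def PB (k : ℕ) (tk : Fin d) : MvPolynomial (Fin d ⊕ (Fin d ⊕ Fin d)) ℂ :=
  ∑ p ∈ Finset.univ.filter
      (fun p : Finset (Fin d) × Finset (Fin d) =>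
        (p.1 ∩ proc d k = p.2 ∩ proc d k ∧ tk ∉ p.1) ∧ tk ∉ p.2),
    term c a (k+1) p

noncomputable def PC (k : ℕ) (tk : Fin d) : MvPolynomial (Fin d ⊕ (Fin d ⊕ Fin d)) ℂ :=
  ∑ p ∈ Finset.univ.filter
      (fun p : Finset (Fin d) × Finset (Fin d) =>
        (p.1 ∩ proc d k = p.2 ∩ proc d k ∧ tk ∈ p.1) ∧ tk ∈ p.2),
    term c a (k+1) p

noncomputable def PD (k : ℕ) (tk : Fin d) : MvPolynomial (Fin d ⊕ (Fin d ⊕ Fin d)) ℂ :=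
  ∑ p ∈ Finset.univ.filter
      (fun p : Finset (Fin d) × Finset (Fin d) =>
        (p.1 ∩ proc d k = p.2 ∩ proc d k ∧ tk ∉ p.1) ∧ tk ∈ p.2),
    term c a (k+1) p

-- basic facts about proc
lemma proc_zero : proc d 0 = ∅ := by
  ext j; simp [proc]

lemma proc_self : proc d d = Finset.univ := by
  ext j; simp [proc, j.isLt]

lemma tk_not_mem_proc {k : ℕ} (hk : k < d) : (⟨k, hk⟩ : Fin d) ∉ proc d k := by
  simp [proc]

lemma proc_succ {k : ℕ} (hk : k < d) :
    proc d (k + 1) = insert (⟨k, hk⟩ : Fin d) (proc d k) := by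
  ext j
  simp only [proc, Finset.mem_filter, Finset.mem_univ, true_and, Finset.mem_insert]
  constructor
  · intro h
    rcases Nat.lt_succ_iff_lt_or_eq.1 h with h | h
    · exact Or.inr h
    · exact Or.inl (Fin.ext h)
  · rintro (rfl | h)
    · exact Nat.lt_succ_self k
    · exact Nat.lt_succ_of_lt h

lemma sdiff_proc_of_not_mem {k : ℕ} (hk : k < d) {s : Finset (Fin d)}
    (h : (⟨k, hk⟩ : Fin d) ∉ s) : s \ proc d k = s \ proc d (k+1) := by
  rw [proc_succ hk]
  ext j
  simp only [Finset.mem_sdiff, Finset.mem_insert]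
  constructor
  · rintro ⟨hj, hj2⟩
    exact ⟨hj, fun hcon => by
      rcases hcon with rfl | hcon
      · exact h hj
      · exact hj2 hcon⟩
  · rintro ⟨hj, hj2⟩
    exact ⟨hj, fun hcon => hj2 (Or.inr hcon)⟩

lemma sdiff_proc_of_mem {k : ℕ} (hk : k < d) {s : Finset (Fin d)}
    (h : (⟨k, hk⟩ : Fin d) ∈ s) :
    s \ proc d k = insert (⟨k, hk⟩ : Fin d) (s \ proc d (k+1)) ∧
      (⟨k, hk⟩ : Fin d) ∉ s \ proc d (k+1) := by
  constructor
  · rw [proc_succ hk]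
    ext j
    simp only [Finset.mem_sdiff, Finset.mem_insert]
    constructor
    · rintro ⟨hj, hj2⟩
      rcases eq_or_ne j ⟨k, hk⟩ with rfl | hne
      · exact Or.inl rfl
      · exact Or.inr ⟨hj, fun hcon => by
          rcases hcon with h' | h'
          · exact hne h'
          · exact hj2 h'⟩
    · rintro (rfl | ⟨hj, hj2⟩)
      · exact ⟨h, tk_not_mem_proc hk⟩
      · exact ⟨hj, fun hcon => hj2 (Or.inr hcon)⟩
  · rw [proc_succ hk]
    simp

-- term at stage k vs stage k+1
lemma term_succ_in_in {k : ℕ} (hk : k < d) {p : Finset (Fin d) × Finset (Fin d)}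
    (h1 : (⟨k, hk⟩ : Fin d) ∈ p.1) (h2 : (⟨k, hk⟩ : Fin d) ∈ p.2) :
    term c a k p = term c a (k+1) p * X (in2 ⟨k, hk⟩) := by
  obtain ⟨hset, hnot⟩ := sdiff_proc_of_mem hk h2
  have h1' : (⟨k, hk⟩ : Fin d) ∉ p.1ᶜ := by simpa using h1
  rw [term, term, sdiff_proc_of_not_mem hk h1', hset, Finset.prod_insert hnot]
  ring

lemma term_succ_out_out {k : ℕ} (hk : k < d) {p : Finset (Fin d) × Finset (Fin d)}
    (h1 : (⟨k, hk⟩ : Fin d) ∉ p.1) (h2 : (⟨k, hk⟩ : Fin d) ∉ p.2) :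
    term c a k p = term c a (k+1) p * X (in1 ⟨k, hk⟩) := by
  have h1' : (⟨k, hk⟩ : Fin d) ∈ p.1ᶜ := by simpa using h1
  obtain ⟨hset, hnot⟩ := sdiff_proc_of_mem hk h1'
  rw [term, term, sdiff_proc_of_not_mem hk h2, hset, Finset.prod_insert hnot]
  ring

lemma term_succ_in_out {k : ℕ} (hk : k < d) {p : Finset (Fin d) × Finset (Fin d)}
    (h1 : (⟨k, hk⟩ : Fin d) ∈ p.1) (h2 : (⟨k, hk⟩ : Fin d) ∉ p.2) :
    term c a k p = term c a (k+1) p := by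
  have h1' : (⟨k, hk⟩ : Fin d) ∉ p.1ᶜ := by simpa using h1
  rw [term, term, sdiff_proc_of_not_mem hk h1', sdiff_proc_of_not_mem hk h2]

lemma term_succ_out_in {k : ℕ} (hk : k < d) {p : Finset (Fin d) × Finset (Fin d)}
    (h1 : (⟨k, hk⟩ : Fin d) ∉ p.1) (h2 : (⟨k, hk⟩ : Fin d) ∈ p.2) :
    term c a k p = term c a (k+1) p * (X (in1 ⟨k, hk⟩) * X (in2 ⟨k, hk⟩)) := by
  have h1' : (⟨k, hk⟩ : Fin d) ∈ p.1ᶜ := by simpa using h1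
  obtain ⟨hset1, hnot1⟩ := sdiff_proc_of_mem hk h1'
  obtain ⟨hset2, hnot2⟩ := sdiff_proc_of_mem hk h2
  rw [term, term, hset1, hset2, Finset.prod_insert hnot1, Finset.prod_insert hnot2]
  ring

-- the decomposition identity
lemma Id1 {k : ℕ} (hk : k < d) :
    RR c a k = PA c a k ⟨k, hk⟩
      + PB c a k ⟨k, hk⟩ * X (in1 ⟨k, hk⟩)
      + PC c a k ⟨k, hk⟩ * X (in2 ⟨k, hk⟩)
      + PD c a k ⟨k, hk⟩ * (X (in1 ⟨k, hk⟩) * X (in2 ⟨k, hk⟩)) := by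
  set tk : Fin d := ⟨k, hk⟩ with htk
  rw [RR]
  rw [← Finset.sum_filter_add_sum_filter_not
    (Finset.univ.filter fun p : Finset (Fin d) × Finset (Fin d) =>
      p.1 ∩ proc d k = p.2 ∩ proc d k) (fun p => tk ∈ p.1)]
  rw [← Finset.sum_filter_add_sum_filter_not
    ((Finset.univ.filter fun p : Finset (Fin d) × Finset (Fin d) =>
      p.1 ∩ proc d k = p.2 ∩ proc d k).filter (fun p => tk ∈ p.1)) (fun p => tk ∈ p.2)]
  rw [← Finset.sum_filter_add_sum_filter_not
    ((Finset.univ.filter fun p : Finset (Fin d) × Finset (Fin d) =>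
      p.1 ∩ proc d k = p.2 ∩ proc d k).filter (fun p => tk ∉ p.1)) (fun p => tk ∈ p.2)]
  simp only [Finset.filter_filter]
  have e1 : ∑ p ∈ Finset.univ.filter
      (fun p : Finset (Fin d) × Finset (Fin d) =>
        (p.1 ∩ proc d k = p.2 ∩ proc d k ∧ tk ∈ p.1) ∧ tk ∈ p.2), term c a k p
      = PC c a k tk * X (in2 tk) := by
    rw [PC, Finset.sum_mul]
    refine Finset.sum_congr rfl fun p hp => ?_
    simp only [Finset.mem_filter] at hp
    exact term_succ_in_in c a hk hp.2.1.2 hp.2.2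
  have e2 : ∑ p ∈ Finset.univ.filter
      (fun p : Finset (Fin d) × Finset (Fin d) =>
        (p.1 ∩ proc d k = p.2 ∩ proc d k ∧ tk ∈ p.1) ∧ ¬tk ∈ p.2), term c a k p
      = PA c a k tk := by
    rw [PA]
    refine Finset.sum_congr rfl fun p hp => ?_
    simp only [Finset.mem_filter] at hp
    exact term_succ_in_out c a hk hp.2.1.2 hp.2.2
  have e3 : ∑ p ∈ Finset.univ.filter
      (fun p : Finset (Fin d) × Finset (Fin d) =>
        (p.1 ∩ proc d k = p.2 ∩ proc d k ∧ ¬tk ∈ p.1) ∧ tk ∈ p.2), term c a k p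
      = PD c a k tk * (X (in1 tk) * X (in2 tk)) := by
    rw [PD, Finset.sum_mul]
    refine Finset.sum_congr rfl fun p hp => ?_
    simp only [Finset.mem_filter] at hp
    exact term_succ_out_in c a hk hp.2.1.2 hp.2.2
  have e4 : ∑ p ∈ Finset.univ.filter
      (fun p : Finset (Fin d) × Finset (Fin d) =>
        (p.1 ∩ proc d k = p.2 ∩ proc d k ∧ ¬tk ∈ p.1) ∧ ¬tk ∈ p.2), term c a k p
      = PB c a k tk * X (in1 tk) := by
    rw [PB, Finset.sum_mul]
    refine Finset.sum_congr rfl fun p hp => ?_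
    simp only [Finset.mem_filter] at hp
    exact term_succ_out_out c a hk hp.2.1.2 hp.2.2
  rw [e1, e2, e3, e4]
  ring

-- the contracted sum identity
lemma Id2 {k : ℕ} (hk : k < d) :
    RR c a (k+1) = PB c a k ⟨k, hk⟩ + PC c a k ⟨k, hk⟩ := by
  set tk : Fin d := ⟨k, hk⟩ with htk
  have condsucc : ∀ p : Finset (Fin d) × Finset (Fin d),
      (p.1 ∩ proc d (k+1) = p.2 ∩ proc d (k+1)) ↔
        ((p.1 ∩ proc d k = p.2 ∩ proc d k) ∧ (tk ∈ p.1 ↔ tk ∈ p.2)) := by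
    intro p
    rw [proc_succ hk, Finset.ext_iff, Finset.ext_iff]
    simp only [Finset.mem_inter, Finset.mem_insert]
    constructor
    · intro h
      refine ⟨fun j => ?_, ?_⟩
      · have hj := h j
        by_cases hjk : j = tk
        · subst hjk
          have := tk_not_mem_proc hk
          tauto
        · tauto
      · have := h tk
        tauto
    · rintro ⟨h1, h2⟩ j
      by_cases hjk : j = tk
      · subst hjk
        have := tk_not_mem_proc hk
        have := h1 tk
        tauto
      · have := h1 j
        tauto
  rw [RR]
  have hfilter : Finset.univ.filter
      (fun p : Finset (Fin d) × Finset (Fin d) => p.1 ∩ proc d (k+1) = p.2 ∩ proc d (k+1))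
      = Finset.univ.filter
        (fun p : Finset (Fin d) × Finset (Fin d) =>
          (p.1 ∩ proc d k = p.2 ∩ proc d k) ∧ (tk ∈ p.1 ↔ tk ∈ p.2)) := by
    apply Finset.filter_congr
    intro p _
    simp only [condsucc p]
  rw [hfilter]
  rw [← Finset.sum_filter_add_sum_filter_not
    (Finset.univ.filter fun p : Finset (Fin d) × Finset (Fin d) =>
      (p.1 ∩ proc d k = p.2 ∩ proc d k) ∧ (tk ∈ p.1 ↔ tk ∈ p.2)) (fun p => tk ∈ p.1)]
  simp only [Finset.filter_filter]
  have g1 : Finset.univ.filter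
      (fun p : Finset (Fin d) × Finset (Fin d) =>
        ((p.1 ∩ proc d k = p.2 ∩ proc d k) ∧ (tk ∈ p.1 ↔ tk ∈ p.2)) ∧ tk ∈ p.1)
      = Finset.univ.filter
        (fun p : Finset (Fin d) × Finset (Fin d) =>
          (p.1 ∩ proc d k = p.2 ∩ proc d k ∧ tk ∈ p.1) ∧ tk ∈ p.2) := by
    apply Finset.filter_congr
    intro p _
    constructor
    · rintro ⟨⟨hc, hiff⟩, h1⟩
      exact ⟨⟨hc, h1⟩, hiff.1 h1⟩
    · rintro ⟨⟨hc, h1⟩, h2⟩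
      exact ⟨⟨hc, ⟨fun _ => h2, fun _ => h1⟩⟩, h1⟩
  have g2 : Finset.univ.filter
      (fun p : Finset (Fin d) × Finset (Fin d) =>
        ((p.1 ∩ proc d k = p.2 ∩ proc d k) ∧ (tk ∈ p.1 ↔ tk ∈ p.2)) ∧ ¬tk ∈ p.1)
      = Finset.univ.filter
        (fun p : Finset (Fin d) × Finset (Fin d) =>
          (p.1 ∩ proc d k = p.2 ∩ proc d k ∧ ¬tk ∈ p.1) ∧ ¬tk ∈ p.2) := by
    apply Finset.filter_congr
    intro p _
    constructor
    · rintro ⟨⟨hc, hiff⟩, h1⟩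
      exact ⟨⟨hc, h1⟩, fun h => h1 (hiff.2 h)⟩
    · rintro ⟨⟨hc, h1⟩, h2⟩
      exact ⟨⟨hc, ⟨fun h => absurd h h1, fun h => absurd h h2⟩⟩, h1⟩
  rw [g1, g2]
  rw [PB, PC]
  exact add_comm _ _

-- independence of the coefficients
lemma indep_rename (y : Fin d ⊕ Fin d) (q : MvPolynomial (Fin d) ℂ) :
    Indep (Sum.inr y : Fin d ⊕ (Fin d ⊕ Fin d)) (rename in0 q) := by
  intro x s
  have hco : (Function.update x (Sum.inr y) s) ∘ in0 = x ∘ in0 := by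
    funext j
    exact Function.update_of_ne (by simp [in0]) _ _
  rw [MvPolynomial.eval_rename, MvPolynomial.eval_rename, hco]

lemma indep_term_w {k : ℕ} (hk : k < d) (p : Finset (Fin d) × Finset (Fin d)) :
    Indep (in1 ⟨k, hk⟩) (term c a (k+1) p) := by
  have htk : (⟨k, hk⟩ : Fin d) ∈ proc d (k+1) := by
    rw [proc_succ hk]; exact Finset.mem_insert_self _ _
  refine ((( indep_rename _ _).mul (Indep.C _)).mul (Indep.prod _ _ fun j hj => ?_)).mul
    (Indep.prod _ _ fun j hj => ?_)
  · refine Indep.X ?_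
    simp only [Finset.mem_sdiff] at hj
    intro hcon
    have : j = ⟨k, hk⟩ := by
      simpa [in1, Sum.inr.injEq, Sum.inl.injEq] using hcon
    exact hj.2 (this ▸ htk)
  · exact Indep.X (by simp [in1, in2])

lemma indep_term_v {k : ℕ} (hk : k < d) (p : Finset (Fin d) × Finset (Fin d)) :
    Indep (in2 ⟨k, hk⟩) (term c a (k+1) p) := by
  have htk : (⟨k, hk⟩ : Fin d) ∈ proc d (k+1) := by
    rw [proc_succ hk]; exact Finset.mem_insert_self _ _
  refine ((( indep_rename _ _).mul (Indep.C _)).mul (Indep.prod _ _ fun j hj => ?_)).mul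
    (Indep.prod _ _ fun j hj => ?_)
  · exact Indep.X (by simp [in1, in2])
  · refine Indep.X ?_
    simp only [Finset.mem_sdiff] at hj
    intro hcon
    have : j = ⟨k, hk⟩ := by
      simpa [in2, Sum.inr.injEq, Sum.inl.injEq] using hcon
    exact hj.2 (this ▸ htk)

lemma zero_step {k : ℕ} (hk : k < d) (h : RR c a k = 0) : RR c a (k+1) = 0 := by
  set tk : Fin d := ⟨k, hk⟩ with htkdef
  have hne : in1 tk ≠ in2 tk := by simp [in1, in2]
  have hId := (Id1 c a hk).symm
  rw [h] at hId
  rw [Id2 c a hk]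
  apply MvPolynomial.funext
  intro x
  have iPAw : Indep (in1 tk) (PA c a k tk) := Indep.sum _ _ fun p _ => indep_term_w c a hk p
  have iPAv : Indep (in2 tk) (PA c a k tk) := Indep.sum _ _ fun p _ => indep_term_v c a hk p
  have iPBw : Indep (in1 tk) (PB c a k tk) := Indep.sum _ _ fun p _ => indep_term_w c a hk p
  have iPBv : Indep (in2 tk) (PB c a k tk) := Indep.sum _ _ fun p _ => indep_term_v c a hk p
  have iPCw : Indep (in1 tk) (PC c a k tk) := Indep.sum _ _ fun p _ => indep_term_w c a hk p
  have iPCv : Indep (in2 tk) (PC c a k tk) := Indep.sum _ _ fun p _ => indep_term_v c a hk p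
  have iPDw : Indep (in1 tk) (PD c a k tk) := Indep.sum _ _ fun p _ => indep_term_w c a hk p
  have iPDv : Indep (in2 tk) (PD c a k tk) := Indep.sum _ _ fun p _ => indep_term_v c a hk p
  have key : ∀ s s' : ℂ,
      MvPolynomial.eval x (PA c a k tk) + MvPolynomial.eval x (PB c a k tk) * s
        + MvPolynomial.eval x (PC c a k tk) * s'
        + MvPolynomial.eval x (PD c a k tk) * (s * s') = 0 := by
    intro s s'
    set x' : (Fin d ⊕ (Fin d ⊕ Fin d)) → ℂ :=
      Function.update (Function.update x (in1 tk) s) (in2 tk) s' with hx'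
    have hx'w : x' (in1 tk) = s := by
      rw [hx', Function.update_of_ne hne, Function.update_self]
    have hx'v : x' (in2 tk) = s' := Function.update_self _ _ _
    have h0 := congrArg (MvPolynomial.eval x') hId
    simp only [map_zero, map_add, map_mul, MvPolynomial.eval_X] at h0
    rw [hx'w, hx'v] at h0
    rw [hx', iPAv _ s', iPAw _ s, iPBv _ s', iPBw _ s, iPCv _ s', iPCw _ s,
      iPDv _ s', iPDw _ s] at h0
    exact h0
  have k00 := key 0 0
  have k10 := key 1 0
  have k01 := key 0 1
  simp only [mul_zero, mul_one, zero_mul, add_zero, one_mul] at k00 k10 k01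
  rw [map_add, map_zero]
  have hβ : MvPolynomial.eval x (PB c a k tk) = 0 := by linear_combination k10 - k00
  have hγ : MvPolynomial.eval x (PC c a k tk) = 0 := by linear_combination k01 - k00
  rw [hβ, hγ, add_zero]

lemma step {k : ℕ} (hk : k < d) (h : Stable (RR c a k)) :
    Stable (RR c a (k+1)) ∨ RR c a (k+1) = 0 := by
  set tk : Fin d := ⟨k, hk⟩ with htkdef
  have hne : in1 tk ≠ in2 tk := by simp [in1, in2]
  have hcon := contraction (in1 tk) (in2 tk) hne
    (PA c a k tk) (PB c a k tk) (PC c a k tk) (PD c a k tk)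
    (Indep.sum _ _ fun p _ => indep_term_w c a hk p)
    (Indep.sum _ _ fun p _ => indep_term_v c a hk p)
    (Indep.sum _ _ fun p _ => indep_term_w c a hk p)
    (Indep.sum _ _ fun p _ => indep_term_v c a hk p)
    (Indep.sum _ _ fun p _ => indep_term_w c a hk p)
    (Indep.sum _ _ fun p _ => indep_term_v c a hk p)
    (Indep.sum _ _ fun p _ => indep_term_w c a hk p)
    (Indep.sum _ _ fun p _ => indep_term_v c a hk p)
    (by rw [← Id1 c a hk]; exact h)
  rw [Id2 c a hk]
  exact hcon

lemma chain : ∀ n k, k + n = d → (Stable (RR c a k) ∨ RR c a k = 0) →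
    (Stable (RR c a d) ∨ RR c a d = 0) := by
  intro n
  induction n with
  | zero =>
    intro k hk h
    have hkd : k = d := by omega
    rwa [hkd] at h
  | succ n ih =>
    intro k hk h
    have hkd : k < d := by omega
    refine ih (k+1) (by omega) ?_
    rcases h with h | h
    · exact step c a hkd h
    · exact Or.inr (zero_step c a hkd h)

lemma RR_zero :
    RR c a 0 = (∑ S : Finset (Fin d), rename in0 (c S) * ∏ j ∈ Sᶜ, X (in1 j))
      * (∑ S : Finset (Fin d), MvPolynomial.C (a S) * ∏ j ∈ S, X (in2 j)) := by
  rw [Finset.sum_mul_sum, RR]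
  have hflt : Finset.univ.filter
      (fun p : Finset (Fin d) × Finset (Fin d) => p.1 ∩ proc d 0 = p.2 ∩ proc d 0)
      = Finset.univ := by
    apply Finset.filter_true_of_mem
    intro p _
    rw [proc_zero]
    simp
  rw [hflt, ← Finset.univ_product_univ, Finset.sum_product]
  refine Finset.sum_congr rfl fun S _ => Finset.sum_congr rfl fun S' _ => ?_
  rw [term, proc_zero, Finset.sdiff_empty, Finset.sdiff_empty]
  ring

lemma RR_d :
    RR c a d = ∑ S : Finset (Fin d), MvPolynomial.C (a S) * rename in0 (c S) := by
  rw [RR]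
  have hflt : Finset.univ.filter
      (fun p : Finset (Fin d) × Finset (Fin d) => p.1 ∩ proc d d = p.2 ∩ proc d d)
      = Finset.univ.filter (fun p : Finset (Fin d) × Finset (Fin d) => p.1 = p.2) := by
    apply Finset.filter_congr
    intro p _
    rw [proc_self, Finset.inter_univ, Finset.inter_univ]
  rw [hflt]
  rw [Finset.sum_filter]
  rw [← Finset.univ_product_univ, Finset.sum_product]
  have : ∀ S : Finset (Fin d),
      (∑ S' : Finset (Fin d), if S = S' then term c a d (S, S') else 0)
        = MvPolynomial.C (a S) * rename in0 (c S) := by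
    intro S
    rw [Finset.sum_ite_eq (Finset.univ) S (fun S' => term c a d (S, S'))]
    simp only [Finset.mem_univ, if_true]
    rw [term, proc_self]
    have h1 : ∀ s : Finset (Fin d), s \ Finset.univ = ∅ := fun s => by
      simp [Finset.sdiff_eq_empty_iff_subset]
    rw [h1, h1, Finset.prod_empty, Finset.prod_empty, mul_one, mul_one]
    ring
  refine Finset.sum_congr rfl fun S _ => ?_
  exact this S

end Main
noncomputable def sig {d : ℕ} (S : Finset (Fin d)) : Fin d →₀ ℕ :=
  ∑ j ∈ S, Finsupp.single j 1

lemma sig_apply {d : ℕ} (S : Finset (Fin d)) (i : Fin d) :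
    sig S i = if i ∈ S then 1 else 0 := by
  rw [sig, Finset.sum_apply']
  simp only [Finsupp.single_apply]
  rw [Finset.sum_ite_eq' S i (fun _ => 1)]

lemma sig_inj {d : ℕ} : Function.Injective (sig (d := d)) := by
  intro S S' h
  ext i
  have := congrArg (fun g : Fin d →₀ ℕ => g i) h
  simp only [sig_apply] at this
  by_cases h1 : i ∈ S <;> by_cases h2 : i ∈ S' <;> simp [h1, h2] at this ⊢ <;> tauto

lemma prod_X_eq {d : ℕ} (S : Finset (Fin d)) :
    (∏ j ∈ S, (X j : MvPolynomial (Fin d) ℂ)) = monomial (sig S) 1 := by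
  classical
  induction S using Finset.induction_on with
  | empty => simp [sig]
  | @insert j S hj ih =>
    rw [Finset.prod_insert hj, ih,
      show sig (insert j S) = Finsupp.single j 1 + sig S from by
        rw [sig, Finset.sum_insert hj, ← sig],
      show (X j : MvPolynomial (Fin d) ℂ) = monomial (Finsupp.single j 1) 1 from rfl,
      monomial_mul, mul_one]

lemma rep {d : ℕ} (f : MvPolynomial (Fin d) ℂ) (hdeg : ∀ i, f.degreeOf i ≤ 1) :
    f = ∑ S : Finset (Fin d), MvPolynomial.C (coeff (sig S) f) * ∏ j ∈ S, X j := by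
  have h1 : ∀ S : Finset (Fin d),
      MvPolynomial.C (coeff (sig S) f) * ∏ j ∈ S, (X j : MvPolynomial (Fin d) ℂ)
        = monomial (sig S) (coeff (sig S) f) := by
    intro S; rw [prod_X_eq, C_mul_monomial, mul_one]
  rw [Finset.sum_congr rfl fun S _ => h1 S]
  have hsub : f.support ⊆ Finset.univ.image sig := by
    intro μ hμ
    have hball : ∀ i, μ i ≤ 1 := by
      intro i
      exact le_trans (MvPolynomial.monomial_le_degreeOf i hμ) (hdeg i)
    refine Finset.mem_image.2 ⟨μ.support, Finset.mem_univ _, ?_⟩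
    ext i
    rw [sig_apply]
    by_cases h : i ∈ μ.support
    · rw [if_pos h]
      have h3 := Finsupp.mem_support_iff.1 h
      have h2 := hball i
      omega
    · rw [if_neg h]
      exact (Finsupp.notMem_support_iff.1 h).symm
  have himage : ∑ S : Finset (Fin d), monomial (sig S) (coeff (sig S) f)
      = ∑ μ ∈ Finset.univ.image sig, monomial μ (coeff μ f) := by
    rw [Finset.sum_image (fun x _ y _ h => sig_inj h)]
  rw [himage]
  rw [← Finset.sum_subset hsub (fun μ _ hμ => by
    rw [MvPolynomial.notMem_support_iff.1 hμ]
    simp)]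
  exact (MvPolynomial.support_sum_monomial_coeff f).symm


end BB


open BB MvPolynomial in
/-- **Theorem (Borcea–Brändén, sufficiency: stability of the algebraic symbol).**
Let `T` be a `ℂ`-linear map on polynomials in `z_1,…,z_d` (only its action on
multi-affine polynomials matters), and let its algebraic symbol be
`G_T(z,w) = ∑_{S ⊆ {1,…,d}} (∏_{j ∉ S} w_j) · T(∏_{j ∈ S} z_j)`, a polynomial in the
`2d` variables `z, w`.  If `G_T` is stable, then for every stable multi-affine
`f ∈ ℂ[z_1,…,z_d]`, the polynomial `T(f)` is stable or identically zero. -/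
theorem stmt14 (d : ℕ)
    (T : MvPolynomial (Fin d) ℂ →ₗ[ℂ] MvPolynomial (Fin d) ℂ)
    (hGT : ∀ z : Fin d ⊕ Fin d → ℂ, (∀ j, 0 < (z j).im) →
      MvPolynomial.eval z
        (∑ S : Finset (Fin d),
          (∏ j ∈ Sᶜ, MvPolynomial.X (Sum.inr j)) *
            MvPolynomial.rename Sum.inl (T (∏ j ∈ S, MvPolynomial.X j))
          : MvPolynomial (Fin d ⊕ Fin d) ℂ) ≠ 0) :
    ∀ f : MvPolynomial (Fin d) ℂ, (∀ i, f.degreeOf i ≤ 1) →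
      (∀ z : Fin d → ℂ, (∀ j, 0 < (z j).im) → MvPolynomial.eval z f ≠ 0) →
      ((∀ z : Fin d → ℂ, (∀ j, 0 < (z j).im) → MvPolynomial.eval z (T f) ≠ 0) ∨
        T f = 0) := by
  intro f hdeg hstab
  classical
  set a : Finset (Fin d) → ℂ := fun S => MvPolynomial.coeff (sig S) f with ha
  set c : Finset (Fin d) → MvPolynomial (Fin d) ℂ :=
    fun S => T (∏ j ∈ S, MvPolynomial.X j) with hc
  have hf : f = ∑ S : Finset (Fin d), MvPolynomial.C (a S) * ∏ j ∈ S, MvPolynomial.X j :=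
    rep f hdeg
  -- T f in terms of the coefficients
  have hTf : T f = ∑ S : Finset (Fin d), MvPolynomial.C (a S) * c S := by
    conv_lhs => rw [hf]
    rw [map_sum]
    refine Finset.sum_congr rfl fun S _ => ?_
    rw [← MvPolynomial.smul_eq_C_mul, map_smul, MvPolynomial.smul_eq_C_mul]
  -- RR at the last stage is the rename of T f
  have hRRd : RR c a d = rename in0 (T f) := by
    rw [RR_d, hTf, map_sum]
    refine Finset.sum_congr rfl fun S _ => ?_
    rw [map_mul, MvPolynomial.rename_C]
  -- RR at stage 0 is stable
  have hRR0 : Stable (RR c a 0) := by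
    intro x hx
    rw [RR_zero, map_mul]
    apply mul_ne_zero
    · have hval : MvPolynomial.eval x
          (∑ S : Finset (Fin d), rename in0 (c S) * ∏ j ∈ Sᶜ, MvPolynomial.X (in1 j))
          = MvPolynomial.eval (Sum.elim (x ∘ in0) (x ∘ in1))
            (∑ S : Finset (Fin d),
              (∏ j ∈ Sᶜ, MvPolynomial.X (Sum.inr j)) *
                MvPolynomial.rename Sum.inl (c S)
              : MvPolynomial (Fin d ⊕ Fin d) ℂ) := by
        rw [map_sum, map_sum]
        refine Finset.sum_congr rfl fun S _ => ?_
        rw [map_mul, map_mul, MvPolynomial.eval_rename, MvPolynomial.eval_rename,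
          map_prod, map_prod]
        simp only [MvPolynomial.eval_X]
        have hcomp : (Sum.elim (x ∘ in0) (x ∘ in1)) ∘ Sum.inl = x ∘ in0 := rfl
        rw [hcomp]
        have hprod : ∀ j : Fin d, Sum.elim (x ∘ in0) (x ∘ in1) (Sum.inr j) = x (in1 j) :=
          fun j => rfl
        rw [Finset.prod_congr rfl fun j _ => hprod j]
        ring
      rw [hval]
      refine hGT (Sum.elim (x ∘ in0) (x ∘ in1)) ?_
      intro j
      cases j with
      | inl j => exact hx (in0 j)
      | inr j => exact hx (in1 j)
    · have hval : MvPolynomial.eval x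
          (∑ S : Finset (Fin d), MvPolynomial.C (a S) * ∏ j ∈ S, MvPolynomial.X (in2 j))
          = MvPolynomial.eval (x ∘ in2) f := by
        conv_rhs => rw [hf]
        rw [map_sum, map_sum]
        refine Finset.sum_congr rfl fun S _ => ?_
        rw [map_mul, map_mul, MvPolynomial.eval_C, MvPolynomial.eval_C, map_prod, map_prod]
        simp only [MvPolynomial.eval_X]
        rfl
      rw [hval]
      exact hstab (x ∘ in2) (fun j => hx (in2 j))
  have hchain := chain c a d 0 (by omega) (Or.inl hRR0)
  rcases hchain with h | h
  · left
    intro z hz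
    set x : (Fin d ⊕ (Fin d ⊕ Fin d)) → ℂ := Sum.elim z (fun _ => Complex.I) with hxdef
    have hmem : ∀ i, 0 < (x i).im := by
      intro i
      cases i with
      | inl j => exact hz j
      | inr j => simp [hxdef]
    have := h x hmem
    rw [hRRd, MvPolynomial.eval_rename] at this
    have hcomp : x ∘ in0 = z := rfl
    rwa [hcomp] at this
  · right
    rw [hRRd] at h
    have hinj := MvPolynomial.rename_injective (R := ℂ)
      (in0 : Fin d → (Fin d ⊕ (Fin d ⊕ Fin d))) Sum.inl_injective
    apply hinj
    rw [h, map_zero]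
end

section
/- Lieb–Sokal lemma: let P, Q ∈ ℂ[z_1,…,z_d], fix an index j, and suppose that the polynomial P(z) + w·Q(z) in the d+1 variables z_1,…,z_d,w is stable and that the variable z_j occurs in P + wQ with degree at most 1. Then the polynomial P(z) − (∂Q/∂z_j)(z) is stable or identically zero. -/
open Polynomial Complex

namespace LiebSokal

lemma eval_aeval_line {d : ℕ} (L : Fin d → Polynomial ℂ) (t : ℂ) (R : MvPolynomial (Fin d) ℂ) :
    (MvPolynomial.aeval L R).eval t = MvPolynomial.eval (fun i => (L i).eval t) R := by
  induction R using MvPolynomial.induction_on with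
  | C a => simp
  | add p q hp hq => simp [hp, hq]
  | mul_X p i hp => simp [hp]

lemma derivative_aeval {d : ℕ} (j : Fin d) (ζ : Fin d → ℂ) (R : MvPolynomial (Fin d) ℂ) :
    Polynomial.derivative
        (MvPolynomial.aeval (fun i => if i = j then Polynomial.X else Polynomial.C (ζ i)) R)
      = MvPolynomial.aeval (fun i => if i = j then Polynomial.X else Polynomial.C (ζ i))
          (MvPolynomial.pderiv j R) := by
  induction R using MvPolynomial.induction_on with
  | C a => simp
  | add p q hp hq => simp [hp, hq]
  | mul_X p i hp =>
    by_cases h : i = j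
    · subst h
      simp only [map_mul, MvPolynomial.aeval_X, Polynomial.derivative_mul, hp,
        MvPolynomial.pderiv_mul, map_add, MvPolynomial.pderiv_X_self, map_one, mul_one,
        if_pos rfl, Polynomial.derivative_X]
      simp
    · simp only [map_mul, MvPolynomial.aeval_X, Polynomial.derivative_mul, hp,
        MvPolynomial.pderiv_mul, map_add, MvPolynomial.pderiv_X_of_ne h, map_zero, mul_zero,
        add_zero, if_neg h, Polynomial.derivative_C]

lemma natDegree_aeval_le {d : ℕ} (j : Fin d) (ζ : Fin d → ℂ) (R : MvPolynomial (Fin d) ℂ) :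
    (MvPolynomial.aeval (fun i => if i = j then Polynomial.X else Polynomial.C (ζ i)) R).natDegree
      ≤ MvPolynomial.degreeOf j R := by
  conv_lhs => rw [R.as_sum]
  rw [map_sum]
  apply Polynomial.natDegree_sum_le_of_forall_le
  intro m hm
  rw [MvPolynomial.aeval_monomial]
  refine le_trans (Polynomial.natDegree_C_mul_le _ _) ?_
  refine le_trans ?_ (MvPolynomial.monomial_le_degreeOf j hm)
  rw [Finsupp.prod]
  refine le_trans (Polynomial.natDegree_prod_le _ _) ?_
  have hterm : ∀ i ∈ m.support,
      ((if i = j then Polynomial.X else Polynomial.C (ζ i)) ^ m i).natDegree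
        = if i = j then m i else 0 := by
    intro i _
    by_cases h : i = j
    · subst h; simp
    · rw [if_neg h, if_neg h, ← Polynomial.C_pow, Polynomial.natDegree_C]
  rw [Finset.sum_congr rfl hterm, Finset.sum_ite_eq' m.support j (fun i => m i)]
  split <;> simp

/-- Affine Taylor expansion for a polynomial of degree ≤ 1 in variable `j`. -/
lemma affine_eval {d : ℕ} (j : Fin d) (R : MvPolynomial (Fin d) ℂ)
    (hR : MvPolynomial.degreeOf j R ≤ 1) (ζ : Fin d → ℂ) (s : ℂ) :
    MvPolynomial.eval (Function.update ζ j s) R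
      = MvPolynomial.eval ζ R + (s - ζ j) * MvPolynomial.eval ζ (MvPolynomial.pderiv j R) := by
  set f : Fin d → Polynomial ℂ := fun i => if i = j then Polynomial.X else Polynomial.C (ζ i)
    with hf
  have hev : ∀ (S : MvPolynomial (Fin d) ℂ) (u : ℂ),
      (MvPolynomial.aeval f S).eval u = MvPolynomial.eval (Function.update ζ j u) S := by
    intro S u
    rw [eval_aeval_line]
    have : (fun i => (f i).eval u) = Function.update ζ j u := by
      funext i
      by_cases h : i = j <;> simp [hf, h, Function.update]
    rw [this]
  set p := MvPolynomial.aeval f R with hp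
  have hdeg : p.natDegree ≤ 1 := le_trans (natDegree_aeval_le j ζ R) hR
  have hrep := Polynomial.eq_X_add_C_of_natDegree_le_one hdeg
  have h1 : MvPolynomial.eval (Function.update ζ j s) R = p.coeff 1 * s + p.coeff 0 := by
    rw [← hev R s, ← hp, hrep]; simp
  have h2 : MvPolynomial.eval ζ R = p.coeff 1 * ζ j + p.coeff 0 := by
    have h := hev R (ζ j)
    rw [Function.update_eq_self] at h
    rw [← h, ← hp, hrep]; simp
  have h3 : MvPolynomial.eval ζ (MvPolynomial.pderiv j R) = p.coeff 1 := by
    have h := hev (MvPolynomial.pderiv j R) (ζ j)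
    rw [Function.update_eq_self] at h
    rw [← h, ← derivative_aeval, ← hf, ← hp, hrep]
    simp
  rw [h1, h2, h3]; ring


lemma im_ratio_nonneg (A C D : ℂ) (hC : C ≠ 0)
    (H : ∀ w : ℂ, 0 < w.im → C * w ^ 2 + A * w - D ≠ 0) : 0 ≤ (A / C).im := by
  obtain ⟨s, hs⟩ := IsAlgClosed.exists_pow_nat_eq (A ^ 2 + 4 * C * D) (by norm_num : 0 < 2)
  set r₁ := (-A + s) / (2 * C) with hr₁
  set r₂ := (-A - s) / (2 * C) with hr₂
  have key : ∀ w : ℂ, C * w ^ 2 + A * w - D = C * (w - r₁) * (w - r₂) := by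
    intro w
    rw [hr₁, hr₂]
    field_simp
    ring_nf
    linear_combination hs
  have him1 : r₁.im ≤ 0 := by
    by_contra h
    push_neg at h
    exact H r₁ h (by rw [key]; simp)
  have him2 : r₂.im ≤ 0 := by
    by_contra h
    push_neg at h
    exact H r₂ h (by rw [key]; simp)
  have hsum : A / C = -(r₁ + r₂) := by
    rw [hr₁, hr₂]; field_simp; ring
  rw [hsum]
  simp only [Complex.neg_im, Complex.add_im]
  linarith


lemma core (a c d : Polynomial ℂ) (r : ℝ) (hr : 0 < r)
    (H : ∀ t : ℂ, ‖t‖ < r → ∀ w : ℂ, 0 < w.im →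
      c.eval t * w ^ 2 + a.eval t * w - d.eval t ≠ 0)
    (ha0 : a.eval 0 = 0) (hc0 : c.eval 0 ≠ 0) : a = 0 := by
  by_contra ha
  -- a ball on which `c` does not vanish
  obtain ⟨r', hr'pos, hr'le, hball⟩ :
      ∃ r' : ℝ, 0 < r' ∧ r' ≤ r ∧ ∀ t : ℂ, ‖t‖ < r' → c.eval t ≠ 0 := by
    have hopen : IsOpen {t : ℂ | c.eval t ≠ 0} :=
      isOpen_compl_singleton.preimage c.continuous
    obtain ⟨ε, hε, hsub⟩ := Metric.isOpen_iff.mp hopen 0 hc0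
    refine ⟨min ε r, lt_min hε hr, min_le_right _ _, fun t ht => ?_⟩
    exact hsub (by simpa [Metric.mem_ball] using lt_of_lt_of_le ht (min_le_left _ _))
  set k := rootMultiplicity 0 a with hk
  have hkpos : 0 < k := (Polynomial.rootMultiplicity_pos ha).mpr ha0
  set a₁ := a /ₘ (Polynomial.X - Polynomial.C 0) ^ k with ha₁
  have ha₁0 : a₁.eval 0 ≠ 0 :=
    Polynomial.eval_divByMonic_pow_rootMultiplicity_ne_zero 0 ha
  have hfact : ∀ t : ℂ, a.eval t = t ^ k * a₁.eval t := by
    intro t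
    have h := congrArg (Polynomial.eval t) (Polynomial.pow_mul_divByMonic_rootMultiplicity_eq a 0)
    rw [← hk, ← ha₁] at h
    simp only [Polynomial.eval_mul, Polynomial.eval_pow, Polynomial.eval_sub,
      Polynomial.eval_X, Polynomial.eval_C, sub_zero] at h
    exact h.symm
  set ψ := a₁.eval 0 / c.eval 0 with hψ
  have hψ0 : ψ ≠ 0 := div_ne_zero ha₁0 hc0
  obtain ⟨ω, hω⟩ := IsAlgClosed.exists_pow_nat_eq
    (-Complex.I * ((‖ψ‖ : ℂ) / ψ)) hkpos
  have hψω : ψ * ω ^ k = -Complex.I * (‖ψ‖ : ℂ) := by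
    rw [hω]; field_simp
  -- the function whose imaginary part we track
  set g : ℝ → ℂ := fun ε => a₁.eval (↑ε * ω) / c.eval (↑ε * ω) * ω ^ k with hg
  have hg0 : (g 0).im = -‖ψ‖ := by
    have h1 : g 0 = ψ * ω ^ k := by
      rw [hg]
      simp only [Complex.ofReal_zero, zero_mul]
      rfl
    rw [h1, hψω]
    simp
  have hgc : ContinuousAt (fun ε : ℝ => (g ε).im) 0 := by
    apply Complex.continuous_im.continuousAt.comp
    apply ContinuousAt.mul _ continuousAt_const
    apply ContinuousAt.div
    · exact (a₁.continuous.comp (continuous_ofReal.mul continuous_const)).continuousAt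
    · exact (c.continuous.comp (continuous_ofReal.mul continuous_const)).continuousAt
    · simpa using hc0
  have hev : ∀ᶠ ε : ℝ in nhds 0, (g ε).im < 0 := by
    apply hgc.tendsto.eventually_lt_const
    show (g 0).im < 0
    rw [hg0]
    simpa using norm_pos_iff.mpr hψ0
  obtain ⟨δ, hδ, hδim⟩ := Metric.eventually_nhds_iff.mp hev
  -- choose a small positive ε
  set ε : ℝ := min (δ / 2) (r' / (2 * (‖ω‖ + 1))) with hε
  have hωpos : 0 < ‖ω‖ + 1 := by positivity
  have hεpos : 0 < ε := by
    apply lt_min (by linarith)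
    positivity
  have hεδ : ε < δ := lt_of_le_of_lt (min_le_left _ _) (by linarith)
  set t : ℂ := ↑ε * ω with hT
  have htnorm : ‖t‖ < r' := by
    have h1 : ‖t‖ = ε * ‖ω‖ := by
      rw [hT]; simp [abs_of_pos hεpos]
    have h2 : ε ≤ r' / (2 * (‖ω‖ + 1)) := min_le_right _ _
    have h3 : ε * ‖ω‖ ≤ r' / (2 * (‖ω‖ + 1)) * (‖ω‖ + 1) := by
      apply mul_le_mul h2 (by linarith) (norm_nonneg ω) (by positivity)
    rw [h1]
    calc ε * ‖ω‖ ≤ r' / (2 * (‖ω‖ + 1)) * (‖ω‖ + 1) := h3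
      _ = r' / 2 := by field_simp
      _ < r' := by linarith
  have hcnz : c.eval t ≠ 0 := hball t htnorm
  have him : 0 ≤ (a.eval t / c.eval t).im :=
    im_ratio_nonneg _ _ _ hcnz (H t (lt_of_lt_of_le htnorm hr'le))
  have hiden : a.eval t / c.eval t = (↑(ε ^ k) : ℂ) * g ε := by
    rw [hfact t, hg, hT]
    push_cast
    ring
  rw [hiden] at him
  rw [Complex.im_ofReal_mul] at him
  have hεk : 0 < ε ^ k := pow_pos hεpos k
  have : (g ε).im < 0 := hδim (by simpa [abs_of_pos hεpos] using hεδ)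
  nlinarith


lemma degreeOf_of_stab {d : ℕ} (P Q : MvPolynomial (Fin d) ℂ) (j : Fin d)
    (hdeg : (MvPolynomial.rename (some : Fin d → Option (Fin d)) P +
        MvPolynomial.X none *
          MvPolynomial.rename (some : Fin d → Option (Fin d)) Q).degreeOf (some j) ≤ 1) :
    MvPolynomial.degreeOf j P ≤ 1 ∧ MvPolynomial.degreeOf j Q ≤ 1 := by
  classical
  set G := MvPolynomial.rename (some : Fin d → Option (Fin d)) P +
      MvPolynomial.X none * MvPolynomial.rename (some : Fin d → Option (Fin d)) Q with hG
  have hinj : Function.Injective (some : Fin d → Option (Fin d)) := Option.some_injective _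
  constructor
  · rw [MvPolynomial.degreeOf_le_iff]
    intro m hm
    set m' : Option (Fin d) →₀ ℕ := m.mapDomain some with hm'
    have hnone : m' none = 0 := Finsupp.mapDomain_notin_range m none (by simp)
    have h1 : MvPolynomial.coeff m' (MvPolynomial.rename (some : Fin d → Option (Fin d)) P)
        = MvPolynomial.coeff m P := MvPolynomial.coeff_rename_mapDomain _ hinj _ _
    have h2 : MvPolynomial.coeff m' (MvPolynomial.X none *
        MvPolynomial.rename (some : Fin d → Option (Fin d)) Q) = 0 := by
      rw [MvPolynomial.coeff_X_mul']
      rw [if_neg]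
      simp [Finsupp.mem_support_iff, hnone]
    have hGc : MvPolynomial.coeff m' G ≠ 0 := by
      rw [hG, MvPolynomial.coeff_add, h1, h2, add_zero]
      exact (MvPolynomial.mem_support_iff.mp hm)
    have := MvPolynomial.monomial_le_degreeOf (some j) (MvPolynomial.mem_support_iff.mpr hGc)
    have hmj : m' (some j) = m j := Finsupp.mapDomain_apply hinj m j
    omega
  · rw [MvPolynomial.degreeOf_le_iff]
    intro m hm
    set m' : Option (Fin d) →₀ ℕ := m.mapDomain some with hm'
    set μ : Option (Fin d) →₀ ℕ := Finsupp.single none 1 + m' with hμ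
    have hnone : m' none = 0 := Finsupp.mapDomain_notin_range m none (by simp)
    have hμnone : μ none = 1 := by
      rw [hμ]; simp [hnone]
    have h1 : MvPolynomial.coeff μ (MvPolynomial.X none *
          MvPolynomial.rename (some : Fin d → Option (Fin d)) Q)
        = MvPolynomial.coeff m Q := by
      rw [hμ, MvPolynomial.coeff_X_mul, MvPolynomial.coeff_rename_mapDomain _ hinj]
    have h2 : MvPolynomial.coeff μ (MvPolynomial.rename (some : Fin d → Option (Fin d)) P)
        = 0 := by
      apply MvPolynomial.coeff_rename_eq_zero
      intro u hu
      exfalso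
      have : (u.mapDomain some) none = 0 := Finsupp.mapDomain_notin_range u none (by simp)
      rw [hu, hμnone] at this
      exact one_ne_zero this
    have hGc : MvPolynomial.coeff μ G ≠ 0 := by
      rw [hG, MvPolynomial.coeff_add, h1, h2, zero_add]
      exact (MvPolynomial.mem_support_iff.mp hm)
    have := MvPolynomial.monomial_le_degreeOf (some j) (MvPolynomial.mem_support_iff.mpr hGc)
    have hμj : μ (some j) = m j := by
      rw [hμ]
      simp [Finsupp.mapDomain_apply hinj]
      exact Finsupp.mapDomain_apply hinj m j
    omega


end LiebSokal



/-- **Lieb–Sokal lemma.**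
Let `P, Q ∈ ℂ[z_1,…,z_d]` and suppose the polynomial `P(z) + w·Q(z)` in the `d+1`
variables `z_1,…,z_d,w` is stable and the variable `z_j` occurs in it with degree at
most 1.  Then `P(z) - (∂Q/∂z_j)(z)` is stable or identically zero.
(The `d+1` variables are indexed by `Option (Fin d)`, with `none` playing the role of
`w`.) -/
theorem stmt15 (d : ℕ) (P Q : MvPolynomial (Fin d) ℂ) (j : Fin d)
    (hstab : ∀ z : Option (Fin d) → ℂ, (∀ i, 0 < (z i).im) →
      MvPolynomial.eval z
        (MvPolynomial.rename (some : Fin d → Option (Fin d)) P +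
          MvPolynomial.X none *
            MvPolynomial.rename (some : Fin d → Option (Fin d)) Q) ≠ 0)
    (hdeg : (MvPolynomial.rename (some : Fin d → Option (Fin d)) P +
        MvPolynomial.X none *
          MvPolynomial.rename (some : Fin d → Option (Fin d)) Q).degreeOf (some j) ≤ 1) :
    (∀ z : Fin d → ℂ, (∀ i, 0 < (z i).im) →
        MvPolynomial.eval z (P - MvPolynomial.pderiv j Q) ≠ 0) ∨
      P - MvPolynomial.pderiv j Q = 0 := by
  obtain ⟨hdegP, hdegQ⟩ := LiebSokal.degreeOf_of_stab P Q j hdeg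
  by_cases hB : P - MvPolynomial.pderiv j Q = 0
  · exact Or.inr hB
  left
  intro z hz heq0
  -- a point where `P - ∂ⱼQ` is nonzero
  obtain ⟨z₁, hz₁⟩ : ∃ x : Fin d → ℂ, MvPolynomial.eval x (P - MvPolynomial.pderiv j Q) ≠ 0 := by
    by_contra h
    push_neg at h
    exact hB (MvPolynomial.funext fun x => by rw [h x, map_zero])
  -- set up the line through z and z₁
  set L : Fin d → Polynomial ℂ :=
    fun i => Polynomial.C (z i) + Polynomial.C (z₁ i - z i) * Polynomial.X with hL
  have hLev : ∀ (R : MvPolynomial (Fin d) ℂ) (t : ℂ),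
      (MvPolynomial.aeval L R).eval t
        = MvPolynomial.eval (fun i => z i + (z₁ i - z i) * t) R := by
    intro R t
    rw [LiebSokal.eval_aeval_line]
    have hfn : (fun i => (L i).eval t) = fun i => z i + (z₁ i - z i) * t := by
      funext i; simp [hL]
    rw [hfn]
  set a : Polynomial ℂ := MvPolynomial.aeval L (P - MvPolynomial.pderiv j Q) with ha
  set c : Polynomial ℂ := MvPolynomial.aeval L Q with hc
  set dd : Polynomial ℂ := MvPolynomial.aeval L (MvPolynomial.pderiv j P) with hdd
  have ha0 : a.eval 0 = 0 := by
    rw [ha, hLev]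
    have hfn : (fun i => z i + (z₁ i - z i) * (0:ℂ)) = z := by funext i; ring
    rw [hfn]
    exact heq0
  have ha1 : a.eval 1 ≠ 0 := by
    rw [ha, hLev]
    have hfn : (fun i => z i + (z₁ i - z i) * (1:ℂ)) = z₁ := by funext i; ring
    rw [hfn]
    exact hz₁
  have hane : a ≠ 0 := fun h => ha1 (by rw [h]; simp)
  -- the radius
  have : Nonempty (Fin d) := ⟨j⟩
  set r : ℝ := Finset.univ.inf' Finset.univ_nonempty
    (fun i => (z i).im / (‖z₁ i - z i‖ + 1)) with hr
  have hrpos : 0 < r := by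
    rw [hr, Finset.lt_inf'_iff]
    intro i _
    have := hz i
    positivity
  have hUHP : ∀ t : ℂ, ‖t‖ < r → ∀ i, 0 < (z i + (z₁ i - z i) * t).im := by
    intro t ht i
    have hle : r ≤ (z i).im / (‖z₁ i - z i‖ + 1) :=
      Finset.inf'_le _ (Finset.mem_univ i)
    have h1 : |((z₁ i - z i) * t).im| ≤ ‖z₁ i - z i‖ * ‖t‖ := by
      refine (Complex.abs_im_le_norm _).trans ?_
      rw [norm_mul]
    have h2 : ‖z₁ i - z i‖ * ‖t‖ ≤ ‖z₁ i - z i‖ * r :=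
      mul_le_mul_of_nonneg_left ht.le (norm_nonneg _)
    have h3 : ‖z₁ i - z i‖ * r < (z i).im := by
      have hA : (0:ℝ) ≤ ‖z₁ i - z i‖ := norm_nonneg _
      have him : 0 < (z i).im := hz i
      have h4 : ‖z₁ i - z i‖ * r
          ≤ ‖z₁ i - z i‖ * ((z i).im / (‖z₁ i - z i‖ + 1)) :=
        mul_le_mul_of_nonneg_left hle hA
      have h5 : ‖z₁ i - z i‖ * ((z i).im / (‖z₁ i - z i‖ + 1))
          < (z i).im := by
        rw [div_eq_inv_mul]
        rw [show ‖z₁ i - z i‖ * ((‖z₁ i - z i‖ + 1)⁻¹ * (z i).im)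
          = (‖z₁ i - z i‖ / (‖z₁ i - z i‖ + 1)) * (z i).im by ring]
        have : ‖z₁ i - z i‖ / (‖z₁ i - z i‖ + 1) < 1 := by
          rw [div_lt_one (by positivity)]
          linarith
        nlinarith
      linarith
    rw [Complex.add_im]
    have := abs_le.mp h1
    linarith
  -- the quadratic stability statement along the line
  have H : ∀ t : ℂ, ‖t‖ < r → ∀ w : ℂ, 0 < w.im →
      c.eval t * w ^ 2 + a.eval t * w - dd.eval t ≠ 0 := by
    intro t ht w hw
    set ζ : Fin d → ℂ := fun i => z i + (z₁ i - z i) * t with hζdef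
    have hζ : ∀ i, 0 < (ζ i).im := hUHP t ht
    have hwne : w ≠ 0 := by
      intro h; rw [h] at hw; simp at hw
    set ζ' : Fin d → ℂ := Function.update ζ j (ζ j - 1 / w) with hζ'def
    have hζ' : ∀ i, 0 < (ζ' i).im := by
      intro i
      rw [hζ'def]
      by_cases h : i = j
      · rw [h, Function.update_self]
        have : (1 / w).im = -w.im / Complex.normSq w := by
          rw [one_div, Complex.inv_im]
        rw [Complex.sub_im, this]
        have hns : 0 < Complex.normSq w := Complex.normSq_pos.mpr hwne
        have : 0 < w.im / Complex.normSq w := div_pos hw hns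
        have := hζ j
        rw [neg_div]
        linarith
      · rw [Function.update_of_ne h]
        exact hζ i
    set zfull : Option (Fin d) → ℂ := fun o => o.elim w ζ' with hzfull
    have hfull : ∀ o, 0 < (zfull o).im := by
      intro o
      cases o with
      | none => exact hw
      | some i => exact hζ' i
    have hG := hstab zfull hfull
    have hGev : MvPolynomial.eval zfull
        (MvPolynomial.rename (some : Fin d → Option (Fin d)) P +
          MvPolynomial.X none *
            MvPolynomial.rename (some : Fin d → Option (Fin d)) Q)
        = MvPolynomial.eval ζ' P + w * MvPolynomial.eval ζ' Q := by
      rw [map_add, map_mul, MvPolynomial.eval_rename, MvPolynomial.eval_rename,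
        MvPolynomial.eval_X]
      rfl
    rw [hGev] at hG
    have hP' : MvPolynomial.eval ζ' P
        = MvPolynomial.eval ζ P - (1 / w) * MvPolynomial.eval ζ (MvPolynomial.pderiv j P) := by
      rw [hζ'def, LiebSokal.affine_eval j P hdegP]
      ring
    have hQ' : MvPolynomial.eval ζ' Q
        = MvPolynomial.eval ζ Q - (1 / w) * MvPolynomial.eval ζ (MvPolynomial.pderiv j Q) := by
      rw [hζ'def, LiebSokal.affine_eval j Q hdegQ]
      ring
    have hkey : c.eval t * w ^ 2 + a.eval t * w - dd.eval t
        = w * (MvPolynomial.eval ζ' P + w * MvPolynomial.eval ζ' Q) := by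
      rw [hP', hQ', hc, ha, hdd, hLev, hLev, hLev, map_sub]
      rw [← hζdef]
      field_simp
      ring
    intro heq
    rw [hkey] at heq
    rcases mul_eq_zero.mp heq with h | h
    · exact hwne h
    · exact hG h
  -- apply the core lemma
  by_cases hcc : c.eval 0 = 0
  · -- then dd.eval 0 ≠ 0, use the inverted quadratic
    have hd0 : dd.eval 0 ≠ 0 := by
      have h := H 0 (by simpa using hrpos) Complex.I (by simp)
      intro hd
      apply h
      rw [hcc, ha0, hd]
      ring
    have H' : ∀ t : ℂ, ‖t‖ < r → ∀ v : ℂ, 0 < v.im →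
        (-dd).eval t * v ^ 2 + (-a).eval t * v - (-c).eval t ≠ 0 := by
      intro t ht v hv heq
      have hvne : v ≠ 0 := by
        intro h; rw [h] at hv; simp at hv
      have hwim : 0 < (-v⁻¹).im := by
        rw [Complex.neg_im, Complex.inv_im, neg_div, neg_neg]
        exact div_pos hv (Complex.normSq_pos.mpr hvne)
      apply H t ht (-v⁻¹) hwim
      have hv2 : (v:ℂ) ^ 2 ≠ 0 := pow_ne_zero _ hvne
      have expand : c.eval t * (-v⁻¹) ^ 2 + a.eval t * (-v⁻¹) - dd.eval t
          = ((-dd).eval t * v ^ 2 + (-a).eval t * v - (-c).eval t) / v ^ 2 := by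
        simp only [Polynomial.eval_neg]
        field_simp
        ring
      rw [expand, heq, zero_div]
    have := LiebSokal.core (-a) (-dd) (-c) r hrpos H' (by simp [ha0]) (by simpa using hd0)
    exact hane (by simpa using this)
  · have := LiebSokal.core a c dd r hrpos H ha0 hcc
    exact hane this
end

section
/- Let A_1, …, A_d be complex positive semidefinite n × n matrices and let B be a complex Hermitian n × n matrix. Then the polynomial f(z_1,…,z_d) := det(z_1 A_1 + ⋯ + z_d A_d + B) is either identically zero or a real stable polynomial (all coefficients real and f nonvanishing whenever all Im(z_j) > 0). If moreover B is positive semidefinite, then all coefficients of f are nonnegative. -/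
open scoped ComplexOrder

namespace Stmt17Aux

open MvPolynomial Matrix Equiv

variable {d n : ℕ} {Q : Type*} [Fintype Q] [DecidableEq Q]

lemma prod_monomial' {ι : Type*} (s : Finset ι) (w : ι → (Fin d →₀ ℕ)) (c : ι → ℂ) :
    (∏ i ∈ s, (monomial (w i) (c i) : MvPolynomial (Fin d) ℂ))
      = monomial (∑ i ∈ s, w i) (∏ i ∈ s, c i) := by
  classical
  induction s using Finset.induction with
  | empty => simp [MvPolynomial.monomial_zero', MvPolynomial.C_1]
  | @insert a s h ih => rw [Finset.prod_insert h, Finset.sum_insert h, Finset.prod_insert h,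
      ih, MvPolynomial.monomial_mul]

lemma det_expand (u : Q → Fin n → ℂ) (e : Q → (Fin d →₀ ℕ)) :
    Matrix.det (Matrix.of fun a b =>
        ∑ p : Q, (monomial (e p) ((starRingEnd ℂ) (u p a) * u p b) : MvPolynomial (Fin d) ℂ))
      = ∑ φ : Fin n → Q, monomial (∑ a, e (φ a))
          ((starRingEnd ℂ) (∏ a, u (φ a) a) * Matrix.det (Matrix.of fun a b => u (φ a) b)) := by
  classical
  set R := MvPolynomial (Fin d) ℂ
  set D := (Matrix.detRowAlternating : (Fin n → R) [⋀^Fin n]→ₗ[R] R).toMultilinearMap with hD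
  have hrow : ∀ a, (Matrix.of fun a b =>
        ∑ p : Q, (monomial (e p) ((starRingEnd ℂ) (u p a) * u p b) : R)) a
      = ∑ p : Q, (monomial (e p) ((starRingEnd ℂ) (u p a)) : R)
          • (fun b => MvPolynomial.C (u p b)) := by
    intro a
    funext b
    simp only [Matrix.of_apply, Finset.sum_apply, Pi.smul_apply, smul_eq_mul]
    refine Finset.sum_congr rfl fun p _ => ?_
    rw [show (MvPolynomial.C (u p b) : R) = monomial 0 (u p b) by
      simp [MvPolynomial.monomial_zero'], MvPolynomial.monomial_mul, add_zero]
  have h1 : Matrix.det (Matrix.of fun a b =>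
        ∑ p : Q, (monomial (e p) ((starRingEnd ℂ) (u p a) * u p b) : R))
      = D (fun a => ∑ p : Q, (monomial (e p) ((starRingEnd ℂ) (u p a)) : R)
          • (fun b => MvPolynomial.C (u p b))) := by
    rw [show (fun a => ∑ p : Q, (monomial (e p) ((starRingEnd ℂ) (u p a)) : R)
          • (fun b => MvPolynomial.C (u p b)))
        = fun a => (Matrix.of fun a b =>
            ∑ p : Q, (monomial (e p) ((starRingEnd ℂ) (u p a) * u p b) : R)) a from
      funext fun a => (hrow a).symm]
    rfl
  rw [h1, D.map_sum]
  refine Finset.sum_congr rfl fun φ _ => ?_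
  rw [D.map_smul_univ]
  have h2 : D (fun a => (fun b => MvPolynomial.C (u (φ a) b)))
      = MvPolynomial.C (Matrix.det (Matrix.of fun a b => u (φ a) b)) := by
    rw [(MvPolynomial.C : ℂ →+* R).map_det]
    rfl
  rw [h2, prod_monomial', ← map_prod]
  rw [show (MvPolynomial.C (Matrix.det (Matrix.of fun a b => u (φ a) b)) : R)
      = monomial 0 (Matrix.det (Matrix.of fun a b => u (φ a) b)) by
    simp [MvPolynomial.monomial_zero']]
  rw [smul_eq_mul, MvPolynomial.monomial_mul, add_zero]

omit [DecidableEq Q] in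
lemma key_sum (u : Q → Fin n → ℂ) (φ : Fin n → Q) :
    ∑ π : Equiv.Perm (Fin n), (starRingEnd ℂ) (∏ a, u (φ (π a)) a)
        * Matrix.det (Matrix.of fun a b => u (φ (π a)) b)
      = (Complex.normSq (Matrix.det (Matrix.of fun a b => u (φ a) b)) : ℂ) := by
  classical
  set N : Matrix (Fin n) (Fin n) ℂ := Matrix.of fun a b => u (φ a) b with hN
  have hperm : ∀ π : Equiv.Perm (Fin n),
      Matrix.det (Matrix.of fun a b => u (φ (π a)) b) = (Equiv.Perm.sign π : ℂ) * N.det := by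
    intro π
    have : (Matrix.of fun a b => u (φ (π a)) b) = N.submatrix π id := by
      ext a b; simp [hN]
    rw [this, Matrix.det_permute]
  calc ∑ π : Equiv.Perm (Fin n), (starRingEnd ℂ) (∏ a, u (φ (π a)) a)
        * Matrix.det (Matrix.of fun a b => u (φ (π a)) b)
      = (∑ π : Equiv.Perm (Fin n), (starRingEnd ℂ) ((Equiv.Perm.sign π : ℂ)
          * ∏ a, N (π a) a)) * N.det := by
        rw [Finset.sum_mul]
        refine Finset.sum_congr rfl fun π _ => ?_
        rw [hperm π, _root_.map_mul]
        have hsgn : (starRingEnd ℂ) ((Equiv.Perm.sign π : ℂ)) = (Equiv.Perm.sign π : ℂ) := by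
          simp
        rw [hsgn]
        have : (∏ a, u (φ (π a)) a) = ∏ a, N (π a) a := by
          refine Finset.prod_congr rfl fun a _ => rfl
        rw [this]; ring
    _ = (starRingEnd ℂ) N.det * N.det := by
        rw [← map_sum, ← Matrix.det_apply']
    _ = (Complex.normSq N.det : ℂ) := by
        rw [mul_comm, Complex.mul_conj]

lemma coeff_nonneg_aux (u : Q → Fin n → ℂ) (e : Q → (Fin d →₀ ℕ)) (m : Fin d →₀ ℕ) :
    (∑ φ : Fin n → Q, if (∑ a, e (φ a)) = m then
        (starRingEnd ℂ) (∏ a, u (φ a) a) * Matrix.det (Matrix.of fun a b => u (φ a) b)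
      else 0).im = 0 ∧
    0 ≤ (∑ φ : Fin n → Q, if (∑ a, e (φ a)) = m then
        (starRingEnd ℂ) (∏ a, u (φ a) a) * Matrix.det (Matrix.of fun a b => u (φ a) b)
      else 0).re := by
  classical
  set F : (Fin n → Q) → ℂ := fun φ =>
    (starRingEnd ℂ) (∏ a, u (φ a) a) * Matrix.det (Matrix.of fun a b => u (φ a) b) with hF
  set W : (Fin n → Q) → (Fin d →₀ ℕ) := fun φ => ∑ a, e (φ a) with hW
  set T : ℂ := ∑ φ : Fin n → Q, if W φ = m then F φ else 0 with hT
  have key_sum' : ∀ φ : Fin n → Q,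
      ∑ π : Equiv.Perm (Fin n), F (φ ∘ π)
        = (Complex.normSq (Matrix.det (Matrix.of fun a b => u (φ a) b)) : ℂ) :=
    fun φ => key_sum u φ
  have hWinv : ∀ (φ : Fin n → Q) (π : Equiv.Perm (Fin n)), W (φ ∘ π) = W φ := by
    intro φ π
    exact Fintype.sum_equiv π _ _ fun a => rfl
  set s : ℝ := ∑ φ : Fin n → Q, if W φ = m then
      Complex.normSq (Matrix.det (Matrix.of fun a b => u (φ a) b)) else 0 with hs
  have hmain : ((n.factorial : ℂ)) * T = (s : ℂ) := by
    have h1 : ((n.factorial : ℂ)) * T = ∑ _π : Equiv.Perm (Fin n), T := by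
      rw [Finset.sum_const, Finset.card_univ, Fintype.card_perm, Fintype.card_fin, nsmul_eq_mul]
    rw [h1]
    have h2 : ∀ π : Equiv.Perm (Fin n),
        T = ∑ φ : Fin n → Q, if W (φ ∘ π) = m then F (φ ∘ π) else 0 := by
      intro π
      rw [hT]
      refine Fintype.sum_bijective (fun φ => φ ∘ ⇑π⁻¹)
        ((Equiv.arrowCongr π (Equiv.refl Q)).bijective) _ _ fun φ => ?_
      have hcmp : (φ ∘ ⇑π⁻¹) ∘ ⇑π = φ := by funext a; simp
      rw [hcmp]
    calc (∑ _π : Equiv.Perm (Fin n), T)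
        = ∑ π : Equiv.Perm (Fin n), ∑ φ : Fin n → Q,
            if W (φ ∘ π) = m then F (φ ∘ π) else 0 :=
          Finset.sum_congr rfl fun π _ => h2 π
      _ = ∑ φ : Fin n → Q, ∑ π : Equiv.Perm (Fin n),
            if W φ = m then F (φ ∘ π) else 0 := by
          rw [Finset.sum_comm]
          exact Finset.sum_congr rfl fun φ _ => Finset.sum_congr rfl fun π _ => by
            rw [hWinv φ π]
      _ = ∑ φ : Fin n → Q, if W φ = m then
            (Complex.normSq (Matrix.det (Matrix.of fun a b => u (φ a) b)) : ℂ) else 0 := by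
          refine Finset.sum_congr rfl fun φ _ => ?_
          by_cases h : W φ = m
          · simp only [if_pos h]
            exact key_sum' φ
          · simp [h]
      _ = (s : ℂ) := by
          rw [hs, Complex.ofReal_sum]
          refine Finset.sum_congr rfl fun φ _ => ?_
          rw [apply_ite Complex.ofReal, Complex.ofReal_zero]
  have hs0 : 0 ≤ s := by
    refine Finset.sum_nonneg fun φ _ => ?_
    split
    · exact Complex.normSq_nonneg _
    · exact le_refl 0
  have hfac : (n.factorial : ℂ) ≠ 0 := by
    exact_mod_cast Nat.cast_ne_zero.mpr (Nat.factorial_ne_zero n)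
  have hTval : T = ((s / n.factorial : ℝ) : ℂ) := by
    apply mul_left_cancel₀ hfac
    rw [hmain]
    push_cast
    field_simp
  rw [hTval]
  constructor
  · simp
  · simpa using div_nonneg hs0 (by positivity)

end Stmt17Aux

/-- **Proposition (determinantal polynomials are real stable).**
Let `A_1, …, A_d` be complex positive semidefinite `n × n` matrices and `B` a complex
Hermitian `n × n` matrix.  Then `f(z) := det(z_1 A_1 + ⋯ + z_d A_d + B)` is either
identically zero or real stable (all coefficients real, and nonvanishing whenever all
`Im(z_j) > 0`).  If moreover `B` is positive semidefinite, then all coefficients of `f`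
are (real and) nonnegative. -/
theorem stmt17 (d n : ℕ) (A : Fin d → Matrix (Fin n) (Fin n) ℂ)
    (hA : ∀ j, (A j).PosSemidef) (B : Matrix (Fin n) (Fin n) ℂ) (hB : B.IsHermitian)
    (f : MvPolynomial (Fin d) ℂ)
    (hf : f = Matrix.det (Matrix.of fun a b =>
      (∑ j, MvPolynomial.X j * MvPolynomial.C (A j a b)) + MvPolynomial.C (B a b))) :
    (f = 0 ∨
      ((∀ m, (f.coeff m).im = 0) ∧
        ∀ z : Fin d → ℂ, (∀ j, 0 < (z j).im) → MvPolynomial.eval z f ≠ 0)) ∧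
    (B.PosSemidef → ∀ m, (f.coeff m).im = 0 ∧ 0 ≤ (f.coeff m).re) := by
  classical
  open MvPolynomial Matrix Equiv Stmt17Aux in
  constructor
  · by_cases hk : ∃ v : Fin n → ℂ, v ≠ 0 ∧ B *ᵥ v = 0 ∧ ∀ j, A j *ᵥ v = 0
    · left
      obtain ⟨v, hv0, hvB, hvA⟩ := hk
      rw [hf, ← Matrix.exists_mulVec_eq_zero_iff]
      refine ⟨fun i => MvPolynomial.C (v i), ?_, ?_⟩
      · obtain ⟨i, hi⟩ := Function.ne_iff.mp hv0
        exact Function.ne_iff.mpr ⟨i, by simpa using hi⟩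
      · funext a
        show ∑ b, (Matrix.of fun a b =>
            (∑ j, MvPolynomial.X j * MvPolynomial.C (A j a b)) + MvPolynomial.C (B a b)) a b
            * MvPolynomial.C (v b) = 0
        have hB0 : ∑ b, B a b * v b = 0 := congrFun hvB a
        have hA0 : ∀ j, ∑ b, A j a b * v b = 0 := fun j => congrFun (hvA j) a
        simp only [Matrix.of_apply, add_mul, Finset.sum_add_distrib, Finset.sum_mul,
          mul_assoc, ← MvPolynomial.C_mul]
        rw [Finset.sum_comm]
        have : ∀ j : Fin d, ∑ b, MvPolynomial.X (R := ℂ) j * MvPolynomial.C (A j a b * v b)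
            = 0 := by
          intro j
          rw [← Finset.mul_sum, ← map_sum, hA0 j]
          simp
        rw [Finset.sum_congr rfl fun j _ => this j, ← map_sum, hB0]
        simp
    · right
      constructor
      · -- realness of coefficients
        intro m
        have hmap : MvPolynomial.map (starRingEnd ℂ) f = f := by
          conv_lhs => rw [hf]
          rw [RingHom.map_det]
          conv_rhs => rw [hf, ← Matrix.det_transpose]
          congr 1
          ext a b
          simp only [RingHom.mapMatrix_apply, Matrix.map_apply, Matrix.of_apply,
            Matrix.transpose_apply, map_add, map_sum, _root_.map_mul,
            MvPolynomial.map_X, MvPolynomial.map_C]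
          have h1 : ∀ j, (starRingEnd ℂ) (A j a b) = A j b a := by
            intro j
            have := congrFun (congrFun (hA j).isHermitian b) a
            simpa [Matrix.conjTranspose_apply] using this
          have h2 : (starRingEnd ℂ) (B a b) = B b a := by
            have := congrFun (congrFun hB b) a
            simpa [Matrix.conjTranspose_apply] using this
          simp [h1, h2]
        have h := congrArg (fun g => MvPolynomial.coeff m g) hmap
        simp only [MvPolynomial.coeff_map] at h
        exact Complex.conj_eq_iff_im.mp h
      · -- stability
        intro z hz hev
        have heval : MvPolynomial.eval z f
            = Matrix.det (Matrix.of fun a b => (∑ j, z j * A j a b) + B a b) := by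
          rw [hf, RingHom.map_det]
          congr 1
          ext a b
          simp [RingHom.mapMatrix_apply]
        rw [heval] at hev
        obtain ⟨v, hv0, hMv⟩ := (Matrix.exists_mulVec_eq_zero_iff).mpr hev
        set c : Fin d → ℂ := fun j => star v ⬝ᵥ (A j *ᵥ v) with hc
        set cB : ℂ := star v ⬝ᵥ (B *ᵥ v) with hcB
        have hMvv : (Matrix.of fun a b => (∑ j, z j * A j a b) + B a b) *ᵥ v
            = (∑ j, z j • (A j *ᵥ v)) + B *ᵥ v := by
          funext a
          simp only [Matrix.mulVec, dotProduct, Matrix.of_apply, Pi.add_apply,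
            Finset.sum_apply, Pi.smul_apply, smul_eq_mul, add_mul, Finset.sum_add_distrib,
            Finset.sum_mul, mul_assoc]
          rw [Finset.sum_comm]
          refine congrArg₂ (· + ·) (Finset.sum_congr rfl fun j _ => ?_) rfl
          rw [Finset.mul_sum]
        have hsum : star v ⬝ᵥ (∑ j, z j • (A j *ᵥ v)) = ∑ j, z j * c j := by
          simp only [dotProduct, Finset.sum_apply, Pi.smul_apply, smul_eq_mul,
            Finset.mul_sum, hc]
          rw [Finset.sum_comm]
          exact Finset.sum_congr rfl fun j _ => Finset.sum_congr rfl fun i _ => by ring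
        have heq : (∑ j, z j * c j) + cB = 0 := by
          have h0 : star v ⬝ᵥ ((Matrix.of fun a b => (∑ j, z j * A j a b) + B a b) *ᵥ v)
              = 0 := by
            rw [hMv, dotProduct_zero]
          rw [hMvv, dotProduct_add, hsum] at h0
          exact h0
        have hcre : ∀ j, 0 ≤ (c j).re ∧ (c j).im = 0 := by
          intro j
          have := (hA j).dotProduct_mulVec_nonneg v
          rw [Complex.le_def] at this
          exact ⟨by simpa using this.1, by simpa using this.2.symm⟩
        have hcBim : cB.im = 0 := by
          have hstar : cB = star cB := by
            conv_lhs => rw [hcB, Matrix.star_dotProduct, Matrix.star_mulVec,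
              ← Matrix.dotProduct_mulVec, hB.eq]
          exact Complex.conj_eq_iff_im.mp hstar.symm
        have him : ∑ j, (z j).im * (c j).re = 0 := by
          have := congrArg Complex.im heq
          simpa [Complex.add_im, Complex.im_sum, Complex.mul_im, (fun j => (hcre j).2), hcBim,
            Finset.sum_add_distrib] using this
        have hcj : ∀ j, c j = 0 := by
          intro j
          have hz0 : ∀ i ∈ Finset.univ, 0 ≤ (z i).im * (c i).re := fun i _ =>
            mul_nonneg (le_of_lt (hz i)) (hcre i).1
          have := (Finset.sum_eq_zero_iff_of_nonneg hz0).mp him j (Finset.mem_univ j)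
          have hre : (c j).re = 0 := by
            rcases mul_eq_zero.mp this with h | h
            · exact absurd h (ne_of_gt (hz j))
            · exact h
          exact Complex.ext hre (hcre j).2
        have hAv : ∀ j, A j *ᵥ v = 0 := fun j =>
          ((hA j).dotProduct_mulVec_zero_iff v).mp (hcj j)
        have hBv : B *ᵥ v = 0 := by
          have := hMv
          rw [hMvv] at this
          simpa [hAv] using this
        exact hk ⟨v, hv0, hBv, hAv⟩
  · -- nonnegative coefficients when B is PSD
    intro hBp m
    open scoped MatrixOrder in
    set L : Option (Fin d) → Matrix (Fin n) (Fin n) ℂ :=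
      fun o => Option.elim o (CFC.sqrt B) fun j => CFC.sqrt (A j) with hL
    set u : (Option (Fin d) × Fin n) → Fin n → ℂ := fun p b => L p.1 p.2 b with hu
    set e : (Option (Fin d) × Fin n) → (Fin d →₀ ℕ) :=
      fun p => Option.elim p.1 0 fun j => Finsupp.single j 1 with he
    have hM : (Matrix.of fun a b =>
        (∑ j, MvPolynomial.X j * MvPolynomial.C (A j a b)) + MvPolynomial.C (B a b))
        = Matrix.of fun a b => ∑ p : Option (Fin d) × Fin n,
            (MvPolynomial.monomial (e p) ((starRingEnd ℂ) (u p a) * u p b)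
              : MvPolynomial (Fin d) ℂ) := by
      ext a b
      rw [Matrix.of_apply, Matrix.of_apply, Fintype.sum_prod_type]
      have hentry : ∀ (o : Option (Fin d)),
          ∑ k, (MvPolynomial.monomial (Option.elim o 0 fun j => Finsupp.single j 1)
              ((starRingEnd ℂ) (L o k a) * L o k b) : MvPolynomial (Fin d) ℂ)
            = MvPolynomial.monomial (Option.elim o 0 fun j => Finsupp.single j 1)
                ((Option.elim o B fun j => A j) a b) := by
        intro o
        rw [← map_sum]
        congr 1
        open scoped MatrixOrder in
        have hsq : (L o)ᴴ * L o = Option.elim o B fun j => A j := by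
          cases o with
          | none => simpa [hL, Matrix.IsHermitian.eq (Matrix.nonneg_iff_posSemidef.mp (CFC.sqrt_nonneg B)).1] using
              CFC.sqrt_mul_sqrt_self B (Matrix.nonneg_iff_posSemidef.mpr hBp)
          | some j => simpa [hL, Matrix.IsHermitian.eq (Matrix.nonneg_iff_posSemidef.mp (CFC.sqrt_nonneg (A j))).1] using
              CFC.sqrt_mul_sqrt_self (A j) (Matrix.nonneg_iff_posSemidef.mpr (hA j))
        calc ∑ k, (starRingEnd ℂ) (L o k a) * L o k b
            = ((L o)ᴴ * L o) a b := by
              rw [Matrix.mul_apply]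
              exact Finset.sum_congr rfl fun k _ => by
                rw [Matrix.conjTranspose_apply]; rfl
          _ = (Option.elim o B fun j => A j) a b := by rw [hsq]
      rw [Finset.sum_congr rfl fun o _ => hentry o, Fintype.sum_option]
      simp only [Option.elim]
      rw [add_comm]
      have h1 : (∑ j, (MvPolynomial.monomial (Finsupp.single j 1) (A j a b)
          : MvPolynomial (Fin d) ℂ))
          = ∑ j, MvPolynomial.X j * MvPolynomial.C (A j a b) := by
        refine Finset.sum_congr rfl fun j _ => ?_
        rw [show (MvPolynomial.X j : MvPolynomial (Fin d) ℂ)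
            = MvPolynomial.monomial (Finsupp.single j 1) 1 from rfl,
          show (MvPolynomial.C (A j a b) : MvPolynomial (Fin d) ℂ)
            = MvPolynomial.monomial 0 (A j a b) by simp [MvPolynomial.monomial_zero'],
          MvPolynomial.monomial_mul]
        simp
      have h2 : (MvPolynomial.monomial (0 : Fin d →₀ ℕ) (B a b) : MvPolynomial (Fin d) ℂ)
          = MvPolynomial.C (B a b) := by simp [MvPolynomial.monomial_zero']
      rw [h1, h2]
    have hcoeff : f.coeff m = ∑ φ : Fin n → (Option (Fin d) × Fin n),
        if (∑ a, e (φ a)) = m then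
          (starRingEnd ℂ) (∏ a, u (φ a) a) * Matrix.det (Matrix.of fun a b => u (φ a) b)
        else 0 := by
      rw [hf, hM, Stmt17Aux.det_expand u e, MvPolynomial.coeff_sum]
      exact Finset.sum_congr rfl fun φ _ => MvPolynomial.coeff_monomial _ _ _
    rw [hcoeff]
    exact Stmt17Aux.coeff_nonneg_aux u e m
end

section
/- Gurvits' capacity theorem: let p be a homogeneous polynomial of degree n in n variables x_1,…,x_n with nonnegative real coefficients that is stable, and define its capacity Cap(p) := inf { p(x_1,…,x_n)/(x_1⋯x_n) : x_1 > 0, …, x_n > 0 }. Then the coefficient of the monomial x_1 x_2 ⋯ x_n in p (equivalently, the mixed partial derivative ∂^n p/∂x_1⋯∂x_n evaluated at 0) is at least Cap(p) · n!/n^n. -/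
open Polynomial in
private lemma prod_map_le_prod_map {α : Type*} (M : Multiset α) (f g : α → ℝ)
    (h0 : ∀ a ∈ M, 0 ≤ f a) (hle : ∀ a ∈ M, f a ≤ g a) :
    (M.map f).prod ≤ (M.map g).prod := by
  induction M using Multiset.induction_on with
  | empty => simp
  | cons a M ih =>
    simp only [Multiset.map_cons, Multiset.prod_cons]
    have hf : 0 ≤ (M.map f).prod := Multiset.prod_nonneg (by
      intro x hx
      obtain ⟨b, hb, rfl⟩ := Multiset.mem_map.mp hx
      exact h0 b (Multiset.mem_cons_of_mem hb))
    have h1 : f a ≤ g a := hle a (Multiset.mem_cons_self a M)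
    have h2 : (M.map f).prod ≤ (M.map g).prod :=
      ih (fun b hb => h0 b (Multiset.mem_cons_of_mem hb))
        (fun b hb => hle b (Multiset.mem_cons_of_mem hb))
    have h0a : 0 ≤ f a := h0 a (Multiset.mem_cons_self a M)
    nlinarith [le_trans h0a h1]

open Polynomial in
private lemma lemA (g : Polynomial ℂ) (B : ℕ) (hd : g.natDegree ≤ B)
    (hroots : ∀ ρ ∈ g.roots, ρ.im ≤ 0) (τ σ : ℂ) (hτ : 0 < τ.im) :
    (τ.im / (τ.im + (norm : ℂ → ℝ) (σ - τ))) ^ B * (norm : ℂ → ℝ) (g.eval σ)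
      ≤ (norm : ℂ → ℝ) (g.eval τ) := by
  set K := (norm : ℂ → ℝ) (σ - τ) with hK
  have hK0 : 0 ≤ K := norm_nonneg _
  set c := τ.im / (τ.im + K) with hc
  have hden : 0 < τ.im + K := by linarith
  have hc0 : 0 < c := div_pos hτ hden
  have hc1 : c ≤ 1 := by
    rw [hc, div_le_one hden]; linarith
  rcases eq_or_ne g 0 with rfl | hg
  · simp
  have hsplit : g.roots.card = g.natDegree :=
    (Polynomial.splits_iff_card_roots).mp (IsAlgClosed.splits g)
  have hfac := Polynomial.C_leadingCoeff_mul_prod_multiset_X_sub_C hsplit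
  have habs : ∀ x : ℂ, (norm : ℂ → ℝ) (g.eval x)
      = (norm : ℂ → ℝ) g.leadingCoeff * (g.roots.map (fun ρ => (norm : ℂ → ℝ) (x - ρ))).prod := by
    intro x
    conv_lhs => rw [← hfac]
    rw [eval_mul, eval_C, norm_mul, eval_multiset_prod]
    congr 1
    rw [← normHom_apply, map_multiset_prod, Multiset.map_map, Multiset.map_map]
    apply congrArg
    apply Multiset.map_congr rfl
    intro ρ _
    simp
  rw [habs τ, habs σ]
  have key : c ^ B * (g.roots.map (fun ρ => (norm : ℂ → ℝ) (σ - ρ))).prod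
      ≤ (g.roots.map (fun ρ => (norm : ℂ → ℝ) (τ - ρ))).prod := by
    have hcard : g.roots.card ≤ B := le_trans (le_of_eq hsplit) hd
    have hstep : (g.roots.map (fun ρ => c * (norm : ℂ → ℝ) (σ - ρ))).prod
        ≤ (g.roots.map (fun ρ => (norm : ℂ → ℝ) (τ - ρ))).prod := by
      apply prod_map_le_prod_map
      · intro ρ _; positivity
      · intro ρ hρ
        have him : ρ.im ≤ 0 := hroots ρ hρ
        have h1 : τ.im ≤ (norm : ℂ → ℝ) (τ - ρ) := by
          have := Complex.abs_im_le_norm (τ - ρ)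
          have : |(τ - ρ).im| ≤ (norm : ℂ → ℝ) (τ - ρ) := Complex.abs_im_le_norm _
          have h2 : τ.im ≤ (τ - ρ).im := by simp [Complex.sub_im]; linarith
          calc τ.im ≤ (τ - ρ).im := h2
            _ ≤ |(τ - ρ).im| := le_abs_self _
            _ ≤ (norm : ℂ → ℝ) (τ - ρ) := Complex.abs_im_le_norm _
        have h2 : (norm : ℂ → ℝ) (σ - ρ) ≤ K + (norm : ℂ → ℝ) (τ - ρ) := by
          calc (norm : ℂ → ℝ) (σ - ρ) = (norm : ℂ → ℝ) ((σ - τ) + (τ - ρ)) := by ring_nf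
            _ ≤ K + (norm : ℂ → ℝ) (τ - ρ) := norm_add_le _ _
        rw [hc, div_mul_eq_mul_div, div_le_iff₀ hden]
        have hx : 0 ≤ (norm : ℂ → ℝ) (τ - ρ) := norm_nonneg _
        nlinarith
    have hprodmul : (g.roots.map (fun ρ => c * (norm : ℂ → ℝ) (σ - ρ))).prod
        = c ^ g.roots.card * (g.roots.map (fun ρ => (norm : ℂ → ℝ) (σ - ρ))).prod := by
      rw [show (fun ρ => c * (norm : ℂ → ℝ) (σ - ρ))
            = (fun ρ => (fun _ => c) ρ * (fun ρ => (norm : ℂ → ℝ) (σ - ρ)) ρ) from rfl,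
        Multiset.prod_map_mul]
      congr 1
      rw [Multiset.map_const', Multiset.prod_replicate]
    have hpow : c ^ B ≤ c ^ g.roots.card :=
      pow_le_pow_of_le_one (le_of_lt hc0) hc1 hcard
    calc c ^ B * (g.roots.map (fun ρ => (norm : ℂ → ℝ) (σ - ρ))).prod
        ≤ c ^ g.roots.card * (g.roots.map (fun ρ => (norm : ℂ → ℝ) (σ - ρ))).prod := by
          apply mul_le_mul_of_nonneg_right hpow
          exact Multiset.prod_nonneg (by
            intro x hx
            obtain ⟨b, _, rfl⟩ := Multiset.mem_map.mp hx
            exact norm_nonneg _)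
      _ = (g.roots.map (fun ρ => c * (norm : ℂ → ℝ) (σ - ρ))).prod := hprodmul.symm
      _ ≤ _ := hstep
  calc c ^ B * ((norm : ℂ → ℝ) g.leadingCoeff * (g.roots.map (fun ρ => (norm : ℂ → ℝ) (σ - ρ))).prod)
      = (norm : ℂ → ℝ) g.leadingCoeff * (c ^ B * (g.roots.map (fun ρ => (norm : ℂ → ℝ) (σ - ρ))).prod) := by ring
    _ ≤ (norm : ℂ → ℝ) g.leadingCoeff * (g.roots.map (fun ρ => (norm : ℂ → ℝ) (τ - ρ))).prod := by
        apply mul_le_mul_of_nonneg_left key (norm_nonneg _)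

open Polynomial in
private lemma logderiv (M : Multiset ℂ) (hM : ∀ ρ ∈ M, ρ.im ≤ 0) (τ : ℂ) (hτ : 0 < τ.im) :
    (M.map (fun ρ => X - C ρ)).prod.eval τ ≠ 0 ∧
    (((M.map (fun ρ => X - C ρ)).prod.derivative.eval τ /
       (M.map (fun ρ => X - C ρ)).prod.eval τ).im ≤ 0) ∧
    (M ≠ 0 → ((M.map (fun ρ => X - C ρ)).prod.derivative.eval τ /
       (M.map (fun ρ => X - C ρ)).prod.eval τ).im < 0) := by
  induction M using Multiset.induction_on with
  | empty => simp
  | cons ρ M ih =>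
    have hρ : ρ.im ≤ 0 := hM ρ (Multiset.mem_cons_self ρ M)
    obtain ⟨ih1, ih2, _⟩ := ih (fun b hb => hM b (Multiset.mem_cons_of_mem hb))
    set h := (M.map (fun ρ => X - C ρ)).prod with hh
    have hτρ : τ - ρ ≠ 0 := by
      intro h0
      have : (τ - ρ).im = 0 := by rw [h0]; simp
      rw [Complex.sub_im] at this
      linarith
    have heval : ((ρ ::ₘ M).map (fun ρ => X - C ρ)).prod.eval τ = (τ - ρ) * h.eval τ := by
      simp [Multiset.map_cons, Multiset.prod_cons]
      exact Or.inl rfl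
    have hne : ((ρ ::ₘ M).map (fun ρ => X - C ρ)).prod.eval τ ≠ 0 := by
      rw [heval]; exact mul_ne_zero hτρ ih1
    have hder : ((ρ ::ₘ M).map (fun ρ => X - C ρ)).prod.derivative.eval τ
        = h.eval τ + (τ - ρ) * h.derivative.eval τ := by
      rw [Multiset.map_cons, Multiset.prod_cons, derivative_mul]
      simp [derivative_X_sub_C]
      rfl
    have hratio : ((ρ ::ₘ M).map (fun ρ => X - C ρ)).prod.derivative.eval τ /
        ((ρ ::ₘ M).map (fun ρ => X - C ρ)).prod.eval τ
        = (τ - ρ)⁻¹ + h.derivative.eval τ / h.eval τ := by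
      rw [hder, heval]
      field_simp
    have hinv : ((τ - ρ)⁻¹).im < 0 := by
      rw [Complex.inv_im]
      apply div_neg_of_neg_of_pos
      · rw [Complex.sub_im]; linarith
      · exact Complex.normSq_pos.mpr hτρ
    refine ⟨hne, ?_, fun _ => ?_⟩ <;>
    · rw [hratio, Complex.add_im]
      linarith

open Polynomial in
private lemma lemD (u : Polynomial ℂ) (hu : ∀ z : ℂ, 0 < z.im → u.eval z ≠ 0)
    (l : ℝ) (hl : 0 < l) (τ : ℂ) (hτ : 0 < τ.im) :
    u.eval τ + (l : ℂ) * u.derivative.eval τ ≠ 0 := by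
  have hu0 : u ≠ 0 := fun h => hu Complex.I (by simp) (by simp [h])
  have hsplit : u.roots.card = u.natDegree :=
    (Polynomial.splits_iff_card_roots).mp (IsAlgClosed.splits u)
  have hfac := Polynomial.C_leadingCoeff_mul_prod_multiset_X_sub_C hsplit
  have hroots : ∀ ρ ∈ u.roots, ρ.im ≤ 0 := by
    intro ρ hρ
    by_contra hlt
    push_neg at hlt
    exact hu ρ hlt ((Polynomial.mem_roots hu0).mp hρ)
  obtain ⟨h1, _, h3⟩ := logderiv u.roots hroots τ hτ
  set g := (u.roots.map (fun ρ => X - C ρ)).prod with hg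
  have ha : u.leadingCoeff ≠ 0 := Polynomial.leadingCoeff_ne_zero.mpr hu0
  have hevalu : u.eval τ = u.leadingCoeff * g.eval τ := by
    conv_lhs => rw [← hfac]
    simp
  have hevald : u.derivative.eval τ = u.leadingCoeff * g.derivative.eval τ := by
    conv_lhs => rw [← hfac]
    rw [derivative_mul]
    simp
  intro hzero
  rw [hevalu, hevald] at hzero
  have hsum : g.eval τ + (l : ℂ) * g.derivative.eval τ = 0 := by
    have : u.leadingCoeff * (g.eval τ + (l : ℂ) * g.derivative.eval τ) = 0 := by
      rw [mul_add]; rw [← hzero]; ring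
    rcases mul_eq_zero.mp this with h | h
    · exact absurd h ha
    · exact h
  rcases eq_or_ne u.roots 0 with hM | hM
  · rw [hg, hM] at hsum
    simp at hsum
  · have hratio : g.derivative.eval τ / g.eval τ = -(1 / (l : ℂ)) := by
      have hl0 : (l : ℂ) ≠ 0 := by exact_mod_cast ne_of_gt hl
      field_simp
      linear_combination hsum
    have h4 := h3 hM
    rw [hratio] at h4
    have h5 : (-(1 / (l : ℂ))).im = 0 := by simp
    rw [h5] at h4
    exact lt_irrefl 0 h4

open Polynomial MvPolynomial in
private noncomputable def restr {k : ℕ} (a : ℂ) (G : Polynomial (MvPolynomial (Fin k) ℂ)) :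
    MvPolynomial (Fin k) ℂ := G.eval (MvPolynomial.C a)

open Polynomial MvPolynomial in
private lemma eval_restr {k : ℕ} (a : ℂ) (G : Polynomial (MvPolynomial (Fin k) ℂ))
    (z : Fin k → ℂ) :
    MvPolynomial.eval z (restr a G) = (G.map (MvPolynomial.eval z)).eval a := by
  rw [restr, Polynomial.eval_map]
  have h1 : Polynomial.eval (MvPolynomial.C a) G
      = Polynomial.eval₂ (RingHom.id _) (MvPolynomial.C a) G := rfl
  rw [h1, Polynomial.hom_eval₂]
  simp

open Polynomial MvPolynomial in
private lemma totalDegree_restr_le {k : ℕ} (a : ℂ) (G : Polynomial (MvPolynomial (Fin k) ℂ))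
    (B : ℕ) (hB : ∀ j, (G.coeff j).totalDegree ≤ B) : (restr a G).totalDegree ≤ B := by
  rw [restr, Polynomial.eval_eq_sum_range]
  apply le_trans (MvPolynomial.totalDegree_finset_sum _ _)
  apply Finset.sup_le
  intro j _
  refine le_trans (MvPolynomial.totalDegree_mul _ _) ?_
  have h2 : (MvPolynomial.C a ^ j : MvPolynomial (Fin k) ℂ).totalDegree = 0 := by
    rw [← MvPolynomial.C_pow, MvPolynomial.totalDegree_C]
  rw [h2, add_zero]
  exact hB j

open Polynomial MvPolynomial in
private lemma eval_eq_tail {k : ℕ} (Q : MvPolynomial (Fin (k+1)) ℂ) (z : Fin (k+1) → ℂ) :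
    MvPolynomial.eval z Q
      = ((finSuccEquiv ℂ k Q).map (MvPolynomial.eval (Fin.tail z))).eval (z 0) := by
  conv_lhs => rw [← Fin.cons_self_tail z]
  rw [MvPolynomial.eval_eq_eval_mv_eval']

open Polynomial MvPolynomial in
private lemma continuous_mveval {m : ℕ} (Q : MvPolynomial (Fin m) ℂ) :
    Continuous fun z : Fin m → ℂ => MvPolynomial.eval z Q := by
  have h : (fun z : Fin m → ℂ => MvPolynomial.eval z Q)
      = fun z => ∑ m' ∈ Q.support, Q.coeff m' * ∏ i, z i ^ m' i := by
    funext z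
    rw [MvPolynomial.eval_eq']
  rw [h]
  apply continuous_finset_sum
  intro m' _
  apply Continuous.mul continuous_const
  apply continuous_finset_prod
  intro i _
  exact ((continuous_apply i).pow _)

open Polynomial MvPolynomial in
private lemma mv_eval_nonneg {m : ℕ} (Q : MvPolynomial (Fin m) ℝ) (hQ : ∀ mo, 0 ≤ Q.coeff mo)
    (x : Fin m → ℝ) (hx : ∀ j, 0 ≤ x j) : 0 ≤ MvPolynomial.eval x Q := by
  rw [MvPolynomial.eval_eq']
  apply Finset.sum_nonneg
  intro m' _
  exact mul_nonneg (hQ m') (Finset.prod_nonneg fun i _ => pow_nonneg (hx i) _)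

open Polynomial in
private lemma conj_eval (f : Polynomial ℝ) (z : ℂ) :
    (f.map (algebraMap ℝ ℂ)).eval ((starRingEnd ℂ) z)
      = (starRingEnd ℂ) ((f.map (algebraMap ℝ ℂ)).eval z) := by
  rw [Polynomial.eval_map, Polynomial.eval_map, Polynomial.hom_eval₂]
  congr 1
  ext r
  simp [Complex.conj_ofReal]

open Polynomial MvPolynomial in
private lemma lemC : ∀ (k : ℕ) (Q : MvPolynomial (Fin k) ℂ),
    (∀ z : Fin k → ℂ, (∀ j, 0 < (z j).im) → MvPolynomial.eval z Q = 0) → Q = 0 := by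
  intro k
  induction k with
  | zero =>
    intro Q h
    have h0 := h (fun _ => Complex.I) (fun j => by simp)
    rw [MvPolynomial.eval_eq'] at h0
    apply MvPolynomial.ext
    intro m
    have hm : m = 0 := Subsingleton.elim _ _
    subst hm
    rcases eq_or_ne (Q.coeff 0) 0 with hc | hc
    · simpa using hc
    · exfalso
      have hsup : Q.support = {0} := by
        apply Finset.ext
        intro m'
        simp only [MvPolynomial.mem_support_iff, Finset.mem_singleton]
        constructor
        · intro _; exact Subsingleton.elim _ _
        · intro hm'; subst hm'; exact hc
      rw [hsup] at h0
      simp at h0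
      exact hc h0
  | succ k ih =>
    intro Q h
    have key : ∀ j, (finSuccEquiv ℂ k Q).coeff j = 0 := by
      intro j
      apply ih
      intro z hz
      have hinf : (finSuccEquiv ℂ k Q).map (MvPolynomial.eval z) = 0 := by
        apply Polynomial.eq_zero_of_infinite_isRoot
        apply Set.infinite_of_injective_forall_mem
          (f := fun m : ℕ => ((m : ℝ) + 1) * Complex.I)
        · intro a b hab
          have h1 : ((a : ℝ) + 1) = ((b : ℝ) + 1) := by
            have := congrArg Complex.im hab
            simpa using this
          have h2 : (a : ℝ) = b := by linarith
          exact_mod_cast h2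
        · intro m
          show Polynomial.IsRoot _ _
          set t : ℂ := ((m : ℝ) + 1 : ℂ) * Complex.I with ht
          have heq := h (Fin.cons t z) ?_
          · unfold Polynomial.IsRoot
            rw [MvPolynomial.eval_eq_eval_mv_eval'] at heq
            exact heq
          · intro j
            refine Fin.cases ?_ ?_ j
            · show 0 < t.im
              rw [ht]
              simp
              positivity
            · intro i
              simpa using hz i
      have := congrArg (fun p => Polynomial.coeff p j) hinf
      simpa [Polynomial.coeff_map] using this
    have hF : finSuccEquiv ℂ k Q = 0 := Polynomial.ext (fun j => by simp [key j])
    exact (finSuccEquiv ℂ k).injective (hF.trans (map_zero _).symm)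

open Polynomial MvPolynomial in
private lemma lemB : ∀ (k : ℕ) (Q : MvPolynomial (Fin k) ℂ) (B : ℕ), Q.totalDegree ≤ B →
    (∀ z : Fin k → ℂ, (∀ j, 0 < (z j).im) → MvPolynomial.eval z Q ≠ 0) →
    ∀ τ σ : Fin k → ℂ, (∀ j, 0 < (τ j).im) → (∀ j, 0 < (σ j).im) →
    (∏ j, ((τ j).im / ((τ j).im + (norm : ℂ → ℝ) (σ j - τ j))) ^ B)
        * (norm : ℂ → ℝ) (MvPolynomial.eval σ Q)
      ≤ (norm : ℂ → ℝ) (MvPolynomial.eval τ Q) := by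
  intro k
  induction k with
  | zero =>
    intro Q B _ _ τ σ _ _
    have hστ : σ = τ := Subsingleton.elim _ _
    subst hστ
    simp
  | succ k ih =>
    intro Q B hd hst τ σ hτ hσ
    set F := finSuccEquiv ℂ k Q with hF
    set u := F.map (MvPolynomial.eval (Fin.tail τ)) with hu
    have htail : ∀ j : Fin k, 0 < ((Fin.tail τ) j).im := fun j => hτ j.succ
    have hstail : ∀ j : Fin k, 0 < ((Fin.tail σ) j).im := fun j => hσ j.succ
    have hu_nv : ∀ t : ℂ, 0 < t.im → u.eval t ≠ 0 := by
      intro t ht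
      have h1 := hst (Fin.cons t (Fin.tail τ)) ?_
      · rwa [MvPolynomial.eval_eq_eval_mv_eval'] at h1
      · intro j
        refine Fin.cases ?_ ?_ j
        · exact ht
        · exact htail
    have hu0 : u ≠ 0 := fun h => hu_nv Complex.I (by simp) (by simp [h])
    have hroots : ∀ ρ ∈ u.roots, ρ.im ≤ 0 := by
      intro ρ hρ
      by_contra hlt
      push_neg at hlt
      exact hu_nv ρ hlt ((Polynomial.mem_roots hu0).mp hρ)
    have hdeg : u.natDegree ≤ B := by
      refine le_trans Polynomial.natDegree_map_le (le_trans ?_ hd)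
      rw [hF, natDegree_finSuccEquiv]
      exact degreeOf_le_totalDegree Q 0
    have step1 := lemA u B hdeg hroots (τ 0) (σ 0) (hτ 0)
    -- step 2 : restriction with x₀ := σ 0
    set R := restr (σ 0) F with hR
    have hevalR : ∀ z : Fin k → ℂ, MvPolynomial.eval z R
        = MvPolynomial.eval (Fin.cons (σ 0) z) Q := by
      intro z
      rw [hR, eval_restr, MvPolynomial.eval_eq_eval_mv_eval']
    have hstR : ∀ z : Fin k → ℂ, (∀ j, 0 < (z j).im) → MvPolynomial.eval z R ≠ 0 := by
      intro z hz
      rw [hevalR]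
      apply hst
      intro j
      refine Fin.cases ?_ ?_ j
      · exact hσ 0
      · exact hz
    have hdR : R.totalDegree ≤ B := by
      apply totalDegree_restr_le
      intro j
      rcases eq_or_ne (F.coeff j) 0 with h0 | h0
      · rw [h0, MvPolynomial.totalDegree_zero]
        exact Nat.zero_le _
      · simp only [hF] at h0 ⊢
        have := MvPolynomial.totalDegree_coeff_finSuccEquiv_add_le Q j h0
        omega
    have step2 := ih R B hdR hstR (Fin.tail τ) (Fin.tail σ) htail hstail
    -- assemble
    have hEτ : (norm : ℂ → ℝ) (MvPolynomial.eval τ Q) = (norm : ℂ → ℝ) (u.eval (τ 0)) := by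
      rw [eval_eq_tail]
    have hEmid : (norm : ℂ → ℝ) (u.eval (σ 0))
        = (norm : ℂ → ℝ) (MvPolynomial.eval (Fin.tail τ) R) := by
      rw [hevalR, MvPolynomial.eval_eq_eval_mv_eval']
    have hEσ : (norm : ℂ → ℝ) (MvPolynomial.eval (Fin.tail σ) R)
        = (norm : ℂ → ℝ) (MvPolynomial.eval σ Q) := by
      rw [hevalR, Fin.cons_self_tail]
    rw [Fin.prod_univ_succ, hEτ]
    set c0 := ((τ 0).im / ((τ 0).im + (norm : ℂ → ℝ) (σ 0 - τ 0))) ^ B with hc0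
    have hc0nn : 0 ≤ c0 := by
      rw [hc0]
      apply pow_nonneg
      apply div_nonneg (le_of_lt (hτ 0))
      have := norm_nonneg (σ 0 - τ 0)
      linarith [hτ 0]
    calc (c0 * ∏ j : Fin k, ((τ j.succ).im / ((τ j.succ).im
            + (norm : ℂ → ℝ) (σ j.succ - τ j.succ))) ^ B) * (norm : ℂ → ℝ) (MvPolynomial.eval σ Q)
        = c0 * ((∏ j : Fin k, (((Fin.tail τ) j).im / (((Fin.tail τ) j).im
            + (norm : ℂ → ℝ) ((Fin.tail σ) j - (Fin.tail τ) j))) ^ B)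
              * (norm : ℂ → ℝ) (MvPolynomial.eval (Fin.tail σ) R)) := by
          rw [hEσ]
          simp only [Fin.tail]
          ring
      _ ≤ c0 * (norm : ℂ → ℝ) (MvPolynomial.eval (Fin.tail τ) R) :=
          mul_le_mul_of_nonneg_left step2 hc0nn
      _ = c0 * (norm : ℂ → ℝ) (u.eval (σ 0)) := by rw [hEmid]
      _ ≤ (norm : ℂ → ℝ) (u.eval (τ 0)) := step1

open Polynomial MvPolynomial in
private lemma poly_zero_of_UHP (g : Polynomial ℂ) (h : ∀ z : ℂ, 0 < z.im → g.eval z = 0) :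
    g = 0 := by
  apply Polynomial.eq_zero_of_infinite_isRoot
  apply Set.infinite_of_injective_forall_mem
    (f := fun m : ℕ => ((m : ℝ) + 1) * Complex.I)
  · intro a b hab
    have h1 : ((a : ℝ) + 1) = ((b : ℝ) + 1) := by
      have := congrArg Complex.im hab
      simpa using this
    have h2 : (a : ℝ) = b := by linarith
    exact_mod_cast h2
  · intro m
    show Polynomial.IsRoot _ _
    apply h
    simp
    positivity

open Polynomial MvPolynomial in
private lemma ev_map_real {m : ℕ} (P : MvPolynomial (Fin m) ℝ) (x : Fin m → ℝ) :
    ((MvPolynomial.eval x P : ℝ) : ℂ)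
      = MvPolynomial.eval (fun j => (x j : ℂ)) (MvPolynomial.map (algebraMap ℝ ℂ) P) := by
  rw [MvPolynomial.eval_map]
  have h1 : MvPolynomial.eval x P = MvPolynomial.eval₂ (RingHom.id ℝ) x P := rfl
  rw [h1]
  have h2 : ((MvPolynomial.eval₂ (RingHom.id ℝ) x P : ℝ) : ℂ)
      = (algebraMap ℝ ℂ) (MvPolynomial.eval₂ (RingHom.id ℝ) x P) := rfl
  rw [h2, MvPolynomial.eval₂_comp_left (algebraMap ℝ ℂ) (RingHom.id ℝ) x P, RingHom.comp_id]
  rfl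

open Polynomial MvPolynomial in
private lemma map_coeff_finSuccEquiv {k : ℕ} (q : MvPolynomial (Fin (k+1)) ℝ) (j : ℕ) :
    MvPolynomial.map (algebraMap ℝ ℂ) ((finSuccEquiv ℝ k q).coeff j)
      = (finSuccEquiv ℂ k (MvPolynomial.map (algebraMap ℝ ℂ) q)).coeff j := by
  apply MvPolynomial.ext
  intro m
  rw [MvPolynomial.coeff_map, finSuccEquiv_coeff_coeff, finSuccEquiv_coeff_coeff,
    MvPolynomial.coeff_map]

open Polynomial MvPolynomial in
private lemma cons_uhp {k : ℕ} (t : ℂ) (z : Fin k → ℂ) (ht : 0 < t.im)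
    (hz : ∀ j, 0 < (z j).im) : ∀ j, 0 < ((Fin.cons t z : Fin (k+1) → ℂ) j).im := by
  intro j
  refine Fin.cases ?_ ?_ j
  · exact ht
  · intro i
    simpa using hz i

open Polynomial MvPolynomial in
private lemma tdeg_restr_bound {k : ℕ} (Q : MvPolynomial (Fin (k+1)) ℂ) (a : ℂ) :
    (restr a (finSuccEquiv ℂ k Q)).totalDegree ≤ Q.totalDegree := by
  apply totalDegree_restr_le
  intro j
  rcases eq_or_ne ((finSuccEquiv ℂ k Q).coeff j) 0 with h0 | h0
  · rw [h0, MvPolynomial.totalDegree_zero]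
    exact Nat.zero_le _
  · have := MvPolynomial.totalDegree_coeff_finSuccEquiv_add_le Q j h0
    omega

open Polynomial MvPolynomial in
private lemma tdeg_restr_deriv_bound {k : ℕ} (Q : MvPolynomial (Fin (k+1)) ℂ) (a : ℂ) :
    (restr a (finSuccEquiv ℂ k Q).derivative).totalDegree ≤ Q.totalDegree := by
  apply totalDegree_restr_le
  intro j
  rw [Polynomial.coeff_derivative]
  refine le_trans (MvPolynomial.totalDegree_mul _ _) ?_
  have h2 : ((j : MvPolynomial (Fin k) ℂ) + 1).totalDegree = 0 := by
    have : ((j : MvPolynomial (Fin k) ℂ) + 1) = MvPolynomial.C ((j : ℂ) + 1) := by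
      simp
    rw [this, MvPolynomial.totalDegree_C]
  rw [h2, add_zero]
  rcases eq_or_ne ((finSuccEquiv ℂ k Q).coeff (j+1)) 0 with h0 | h0
  · rw [h0, MvPolynomial.totalDegree_zero]
    exact Nat.zero_le _
  · have := MvPolynomial.totalDegree_coeff_finSuccEquiv_add_le Q (j+1) h0
    omega

open Polynomial MvPolynomial in
private lemma restriction_realrooted {k : ℕ} (q : MvPolynomial (Fin (k+1)) ℝ)
    (hst : ∀ z : Fin (k+1) → ℂ, (∀ j, 0 < (z j).im) → MvPolynomial.aeval z q ≠ 0)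
    (x : Fin k → ℝ) (hx : ∀ j, 0 < x j) :
    (finSuccEquiv ℝ k q).map (MvPolynomial.eval x) = 0 ∨
      ∀ ρ ∈ (((finSuccEquiv ℝ k q).map (MvPolynomial.eval x)).map (algebraMap ℝ ℂ)).roots,
        ρ.im = 0 := by
  set Qc := MvPolynomial.map (algebraMap ℝ ℂ) q with hQc
  have hstC : ∀ z : Fin (k+1) → ℂ, (∀ j, 0 < (z j).im) → MvPolynomial.eval z Qc ≠ 0 := by
    intro z hz
    rw [hQc, MvPolynomial.eval_map, ← MvPolynomial.aeval_def]
    exact hst z hz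
  set f := (finSuccEquiv ℝ k q).map (MvPolynomial.eval x) with hf
  set fc := f.map (algebraMap ℝ ℂ) with hfc
  set xc : Fin k → ℂ := fun j => ((x j : ℝ) : ℂ) with hxc
  have hfc_eq : fc = (finSuccEquiv ℂ k Qc).map (MvPolynomial.eval xc) := by
    apply Polynomial.ext
    intro j
    rw [hfc, Polynomial.coeff_map, hf, Polynomial.coeff_map, Polynomial.coeff_map]
    rw [hQc, ← map_coeff_finSuccEquiv]
    exact ev_map_real _ x
  have key : ∀ τ : ℂ, 0 < τ.im → fc.eval τ = 0 → fc = 0 := by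
    intro τ hτ h0
    apply poly_zero_of_UHP
    intro s hs
    set B := Qc.totalDegree with hB
    have hub : ∀ (ε : ℝ) (t : ℂ), ((finSuccEquiv ℂ k Qc).map
          (MvPolynomial.eval (fun j => xc j + (ε : ℂ) * Complex.I))).eval t
        = MvPolynomial.eval (Fin.cons t (fun j => xc j + (ε : ℂ) * Complex.I)) Qc := by
      intro ε t
      rw [MvPolynomial.eval_eq_eval_mv_eval']
    have hcomp : ∀ ε : ℝ, 0 < ε →
        ((τ.im / (τ.im + (norm : ℂ → ℝ) (s - τ))) ^ B)
            * (norm : ℂ → ℝ) (MvPolynomial.eval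
                (Fin.cons s (fun j => xc j + (ε:ℂ) * Complex.I)) Qc)
          ≤ (norm : ℂ → ℝ) (MvPolynomial.eval
                (Fin.cons τ (fun j => xc j + (ε:ℂ) * Complex.I)) Qc) := by
      intro ε hε
      set u := (finSuccEquiv ℂ k Qc).map
        (MvPolynomial.eval (fun j => xc j + (ε : ℂ) * Complex.I)) with hu
      have hunv : ∀ t : ℂ, 0 < t.im → u.eval t ≠ 0 := by
        intro t ht
        rw [hu, hub ε t]
        apply hstC
        apply cons_uhp t _ ht
        intro j
        simp [hxc, hε]
      have hu0 : u ≠ 0 := fun h => hunv Complex.I (by simp) (by simp [h])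
      have hroots : ∀ ρ ∈ u.roots, ρ.im ≤ 0 := by
        intro ρ hρ
        by_contra hlt
        push_neg at hlt
        exact hunv ρ hlt ((Polynomial.mem_roots hu0).mp hρ)
      have hdeg : u.natDegree ≤ B := by
        refine le_trans Polynomial.natDegree_map_le ?_
        rw [natDegree_finSuccEquiv]
        exact degreeOf_le_totalDegree Qc 0
      have hA := lemA u B hdeg hroots τ s hτ
      rw [hu, hub ε s, hub ε τ] at hA
      exact hA
    have hlim : ∀ t : ℂ, Filter.Tendsto
        (fun ε : ℝ => MvPolynomial.eval
          (Fin.cons t (fun j => xc j + (ε:ℂ) * Complex.I)) Qc)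
        (nhdsWithin 0 (Set.Ioi 0)) (nhds (fc.eval t)) := by
      intro t
      have hval : fc.eval t = MvPolynomial.eval (Fin.cons t xc) Qc := by
        rw [hfc_eq, MvPolynomial.eval_eq_eval_mv_eval']
      rw [hval]
      have hcont : Continuous fun ε : ℝ =>
          (Fin.cons t (fun j => xc j + (ε:ℂ) * Complex.I) : Fin (k+1) → ℂ) := by
        apply continuous_pi
        intro j
        refine Fin.cases ?_ ?_ j
        · simpa using continuous_const
        · intro i
          simp only [Fin.cons_succ]
          exact continuous_const.add ((Complex.continuous_ofReal).mul continuous_const)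
      have hcont2 : Continuous (fun ε : ℝ => MvPolynomial.eval
          (Fin.cons t (fun j => xc j + (ε:ℂ)*Complex.I)) Qc) :=
        (continuous_mveval Qc).comp hcont
      have h0 : (fun ε : ℝ => MvPolynomial.eval
            (Fin.cons t (fun j => xc j + (ε:ℂ)*Complex.I)) Qc) 0
          = MvPolynomial.eval (Fin.cons t xc) Qc := by
        simp
      rw [← h0]
      exact (hcont2.tendsto 0).mono_left nhdsWithin_le_nhds
    have hfin : ((τ.im / (τ.im + (norm : ℂ → ℝ) (s - τ))) ^ B) * (norm : ℂ → ℝ) (fc.eval s)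
        ≤ (norm : ℂ → ℝ) (fc.eval τ) := by
      refine le_of_tendsto_of_tendsto
        ((Filter.Tendsto.const_mul _ ((continuous_norm.tendsto _).comp (hlim s))))
        ((continuous_norm.tendsto _).comp (hlim τ)) ?_
      filter_upwards [self_mem_nhdsWithin] with ε hε
      exact hcomp ε hε
    rw [h0] at hfin
    simp only [norm_zero] at hfin
    have hcpos : 0 < (τ.im / (τ.im + (norm : ℂ → ℝ) (s - τ))) ^ B := by
      apply pow_pos
      apply div_pos hτ
      have := norm_nonneg (s - τ)
      linarith
    have habs0 : (norm : ℂ → ℝ) (fc.eval s) ≤ 0 := by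
      nlinarith [norm_nonneg (fc.eval s)]
    have : (norm : ℂ → ℝ) (fc.eval s) = 0 :=
      le_antisymm habs0 (norm_nonneg _)
    exact norm_eq_zero.mp this
  rcases eq_or_ne f 0 with h | hne
  · left; exact h
  right
  intro ρ hρ
  by_contra hρim
  have hfc0 : fc ≠ 0 := by
    rw [hfc]
    intro hcontra
    apply hne
    have hinj : Function.Injective (algebraMap ℝ ℂ) := fun a b hab => by
      exact_mod_cast hab
    exact Polynomial.map_injective _ hinj (by simpa using hcontra)
  have hroot : fc.eval ρ = 0 := (Polynomial.mem_roots hfc0).mp hρ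
  rcases lt_or_gt_of_ne hρim with hneg | hpos
  · have hconj : fc.eval ((starRingEnd ℂ) ρ) = 0 := by
      rw [hfc, conj_eval, ← hfc, hroot, map_zero]
    have : 0 < ((starRingEnd ℂ) ρ).im := by
      rw [Complex.conj_im]
      linarith
    exact hfc0 (key _ this hconj)
  · exact hfc0 (key ρ hpos hroot)

open Polynomial MvPolynomial in
private lemma coeff_one_stable {k : ℕ} (q : MvPolynomial (Fin (k+1)) ℝ)
    (hst : ∀ z : Fin (k+1) → ℂ, (∀ j, 0 < (z j).im) → MvPolynomial.aeval z q ≠ 0) :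
    (finSuccEquiv ℝ k q).coeff 1 = 0 ∨
    (∀ w : Fin k → ℂ, (∀ j, 0 < (w j).im) →
      MvPolynomial.aeval w ((finSuccEquiv ℝ k q).coeff 1) ≠ 0) := by
  set Qc := MvPolynomial.map (algebraMap ℝ ℂ) q with hQc
  have hstC : ∀ z : Fin (k+1) → ℂ, (∀ j, 0 < (z j).im) → MvPolynomial.eval z Qc ≠ 0 := by
    intro z hz
    rw [hQc, MvPolynomial.eval_map, ← MvPolynomial.aeval_def]
    exact hst z hz
  set q' := (finSuccEquiv ℝ k q).coeff 1 with hq'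
  set q'c := MvPolynomial.map (algebraMap ℝ ℂ) q' with hq'c
  have haeq : ∀ w : Fin k → ℂ, MvPolynomial.aeval w q' = MvPolynomial.eval w q'c := by
    intro w
    rw [hq'c, MvPolynomial.eval_map, ← MvPolynomial.aeval_def]
  have hq'c_eq : q'c = (finSuccEquiv ℂ k Qc).coeff 1 := by
    rw [hq'c, hq', hQc, map_coeff_finSuccEquiv]
  by_cases hvan : ∃ τ : Fin k → ℂ, (∀ j, 0 < (τ j).im) ∧ MvPolynomial.eval τ q'c = 0
  · left
    obtain ⟨τ, hτ, hτ0⟩ := hvan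
    have hz : q'c = 0 := by
      apply lemC
      intro σ hσ
      -- show eval σ q'c = 0 using τ, via the double limit
      set B := Qc.totalDegree with hB
      set Fc := finSuccEquiv ℂ k Qc with hFc
      set D := Fc.derivative with hD
      set Cst := ∏ j, ((τ j).im / ((τ j).im + (norm : ℂ → ℝ) (σ j - τ j))) ^ B with hCst
      have hCstpos : 0 < Cst := by
        rw [hCst]
        apply Finset.prod_pos
        intro j _
        apply pow_pos
        apply div_pos (hτ j)
        have := norm_nonneg (σ j - τ j)
        linarith [hτ j]
      -- Step 1: for each ε > 0, comparison for Bε := restr (εI) D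
      have step1 : ∀ ε : ℝ, 0 < ε →
          Cst * (norm : ℂ → ℝ) (MvPolynomial.eval σ (restr ((ε:ℂ)*Complex.I) D))
            ≤ (norm : ℂ → ℝ) (MvPolynomial.eval τ (restr ((ε:ℂ)*Complex.I) D)) := by
        intro ε hε
        -- limit over λ → ∞ of stable polynomials V_lam
        have hVst : ∀ lam : ℝ, 0 < lam →
            ∀ z : Fin k → ℂ, (∀ j, 0 < (z j).im) →
              MvPolynomial.eval z (MvPolynomial.C ((1/lam : ℝ) : ℂ)
                  * restr ((ε:ℂ)*Complex.I) Fc + restr ((ε:ℂ)*Complex.I) D) ≠ 0 := by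
          intro lam hlam z hz
          set u := Fc.map (MvPolynomial.eval z) with hu
          have hunv : ∀ t : ℂ, 0 < t.im → u.eval t ≠ 0 := by
            intro t ht
            rw [hu, hFc, ← MvPolynomial.eval_eq_eval_mv_eval']
            exact hstC _ (cons_uhp t z ht hz)
          have hval : MvPolynomial.eval z (MvPolynomial.C ((1/lam : ℝ) : ℂ)
                  * restr ((ε:ℂ)*Complex.I) Fc + restr ((ε:ℂ)*Complex.I) D)
              = ((1/lam : ℝ) : ℂ) * (u.eval ((ε:ℂ)*Complex.I))
                + (u.derivative.eval ((ε:ℂ)*Complex.I)) := by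
            rw [map_add, map_mul, MvPolynomial.eval_C, eval_restr, eval_restr, hD,
              Polynomial.derivative_map]
          rw [hval]
          have hεim : 0 < ((ε:ℂ)*Complex.I).im := by simp [hε]
          have hlemD := lemD u hunv lam hlam ((ε:ℂ)*Complex.I) hεim
          intro hcontra
          apply hlemD
          have hlam0 : ((1/lam : ℝ) : ℂ) ≠ 0 := by
            simp
            positivity
          have := congrArg (fun w => ((lam : ℝ) : ℂ) * w) hcontra
          simp only [mul_add, mul_zero] at this
          rw [← mul_assoc] at this
          have hll : ((lam : ℝ) : ℂ) * ((1/lam : ℝ) : ℂ) = 1 := by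
            rw [← Complex.ofReal_mul]
            rw [mul_one_div, div_self (ne_of_gt hlam)]
            simp
          rw [hll, one_mul] at this
          convert this using 2
        -- each V_lam satisfies comparison via lemB
        have hVcomp : ∀ lam : ℝ, 0 < lam →
            Cst * (norm : ℂ → ℝ) (MvPolynomial.eval σ (MvPolynomial.C ((1/lam : ℝ) : ℂ)
                  * restr ((ε:ℂ)*Complex.I) Fc + restr ((ε:ℂ)*Complex.I) D))
              ≤ (norm : ℂ → ℝ) (MvPolynomial.eval τ (MvPolynomial.C ((1/lam : ℝ) : ℂ)
                  * restr ((ε:ℂ)*Complex.I) Fc + restr ((ε:ℂ)*Complex.I) D)) := by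
          intro lam hlam
          apply lemB k _ B ?_ (hVst lam hlam) τ σ hτ hσ
          refine le_trans (MvPolynomial.totalDegree_add _ _) ?_
          apply max_le
          · refine le_trans (MvPolynomial.totalDegree_mul _ _) ?_
            rw [MvPolynomial.totalDegree_C, zero_add]
            exact hFc ▸ tdeg_restr_bound Qc _
          · exact hD ▸ hFc ▸ tdeg_restr_deriv_bound Qc _
        -- take lam → ∞ along the sequence (m+1)
        have hev : ∀ z : Fin k → ℂ, Filter.Tendsto
            (fun m : ℕ => MvPolynomial.eval z (MvPolynomial.C ((1/((m:ℝ)+1) : ℝ) : ℂ)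
                  * restr ((ε:ℂ)*Complex.I) Fc + restr ((ε:ℂ)*Complex.I) D))
            Filter.atTop (nhds (MvPolynomial.eval z (restr ((ε:ℂ)*Complex.I) D))) := by
          intro z
          have hform : ∀ m : ℕ, MvPolynomial.eval z (MvPolynomial.C ((1/((m:ℝ)+1) : ℝ) : ℂ)
                  * restr ((ε:ℂ)*Complex.I) Fc + restr ((ε:ℂ)*Complex.I) D)
              = ((1/((m:ℝ)+1) : ℝ) : ℂ) * MvPolynomial.eval z (restr ((ε:ℂ)*Complex.I) Fc)
                + MvPolynomial.eval z (restr ((ε:ℂ)*Complex.I) D) := by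
            intro m
            rw [map_add, map_mul, MvPolynomial.eval_C]
          simp only [hform]
          have h1 : Filter.Tendsto (fun m : ℕ => ((1/((m:ℝ)+1) : ℝ) : ℂ))
              Filter.atTop (nhds 0) := by
            rw [show ((0:ℂ)) = ((0:ℝ):ℂ) by simp]
            apply Filter.Tendsto.comp (Complex.continuous_ofReal.tendsto 0)
            exact tendsto_one_div_add_atTop_nhds_zero_nat
          have h2 := (h1.mul_const (MvPolynomial.eval z (restr ((ε:ℂ)*Complex.I) Fc))).add_const
            (MvPolynomial.eval z (restr ((ε:ℂ)*Complex.I) D))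
          simpa using h2
        refine le_of_tendsto_of_tendsto
          ((Filter.Tendsto.const_mul _ ((continuous_norm.tendsto _).comp (hev σ))))
          ((continuous_norm.tendsto _).comp (hev τ)) ?_
        filter_upwards with m
        exact hVcomp ((m:ℝ)+1) (by positivity)
      -- Step 2: ε → 0
      have hev2 : ∀ z : Fin k → ℂ, Filter.Tendsto
          (fun ε : ℝ => MvPolynomial.eval z (restr ((ε:ℂ)*Complex.I) D))
          (nhdsWithin 0 (Set.Ioi 0)) (nhds (MvPolynomial.eval z q'c)) := by
        intro z
        have hform : ∀ ε : ℝ, MvPolynomial.eval z (restr ((ε:ℂ)*Complex.I) D)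
            = (D.map (MvPolynomial.eval z)).eval ((ε:ℂ)*Complex.I) := by
          intro ε
          rw [eval_restr]
        simp only [hform]
        have hval0 : (D.map (MvPolynomial.eval z)).eval 0 = MvPolynomial.eval z q'c := by
          rw [← Polynomial.coeff_zero_eq_eval_zero, Polynomial.coeff_map, hD,
            Polynomial.coeff_derivative, hq'c_eq]
          simp
        rw [← hval0]
        have hcont : Continuous (fun ε : ℝ =>
            (D.map (MvPolynomial.eval z)).eval ((ε:ℂ)*Complex.I)) := by
          apply (D.map (MvPolynomial.eval z)).continuous.comp
          exact (Complex.continuous_ofReal).mul continuous_const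
        have h00 : (fun ε : ℝ => (D.map (MvPolynomial.eval z)).eval ((ε:ℂ)*Complex.I)) 0
            = (D.map (MvPolynomial.eval z)).eval 0 := by
          simp
        rw [← h00]
        exact (hcont.tendsto 0).mono_left nhdsWithin_le_nhds
      have hfin : Cst * (norm : ℂ → ℝ) (MvPolynomial.eval σ q'c)
          ≤ (norm : ℂ → ℝ) (MvPolynomial.eval τ q'c) := by
        refine le_of_tendsto_of_tendsto
          ((Filter.Tendsto.const_mul _ ((continuous_norm.tendsto _).comp (hev2 σ))))
          ((continuous_norm.tendsto _).comp (hev2 τ)) ?_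
        filter_upwards [self_mem_nhdsWithin] with ε hε
        exact step1 ε hε
      rw [hτ0] at hfin
      simp only [norm_zero] at hfin
      have habs0 : (norm : ℂ → ℝ) (MvPolynomial.eval σ q'c) = 0 := by
        have h1 := norm_nonneg (MvPolynomial.eval σ q'c)
        nlinarith
      exact norm_eq_zero.mp habs0
    -- q'c = 0 implies q' = 0
    have hinj : Function.Injective (algebraMap ℝ ℂ) := fun a b hab => by exact_mod_cast hab
    exact MvPolynomial.map_injective _ hinj (by simpa [hq'c] using hz)
  · right
    intro w hw
    rw [haeq]
    push_neg at hvan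
    exact hvan w hw

private lemma multiset_prod_pos (M : Multiset ℝ) (h : ∀ x ∈ M, 0 < x) : 0 < M.prod := by
  induction M using Multiset.induction_on with
  | empty => simp
  | cons a M ih =>
    rw [Multiset.prod_cons]
    exact mul_pos (h a (Multiset.mem_cons_self a M))
      (ih (fun x hx => h x (Multiset.mem_cons_of_mem hx)))

private lemma multiset_sum_pos (M : Multiset ℝ) (h : ∀ x ∈ M, 0 < x) (hM : M ≠ 0) :
    0 < M.sum := by
  induction M using Multiset.induction_on with
  | empty => exact absurd rfl hM
  | cons a M ih =>
    rw [Multiset.sum_cons]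
    rcases eq_or_ne M 0 with rfl | hM0
    · simpa using h a (Multiset.mem_cons_self a 0)
    · have := ih (fun x hx => h x (Multiset.mem_cons_of_mem hx)) hM0
      have ha := h a (Multiset.mem_cons_self a M)
      linarith

private lemma amgm_fin (K : ℕ) (hK : 0 < K) (z : Fin K → ℝ) (hz : ∀ i, 0 ≤ z i) :
    ∏ i, z i ≤ ((∑ i, z i) / K) ^ K := by
  have hK0 : (K : ℝ) ≠ 0 := ne_of_gt (by exact_mod_cast hK)
  have hw1 : ∑ _i : Fin K, (1 / (K : ℝ)) = 1 := by
    rw [Finset.sum_const]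
    simp
    field_simp
  have hgm := Real.geom_mean_le_arith_mean_weighted Finset.univ (fun _ => 1 / (K : ℝ)) z
    (fun i _ => by positivity) hw1 (fun i _ => hz i)
  have hlhs : (∏ i, z i ^ (1 / (K : ℝ))) ^ K = ∏ i, z i := by
    rw [← Finset.prod_pow]
    apply Finset.prod_congr rfl
    intro i _
    rw [← Real.rpow_natCast (z i ^ (1 / (K : ℝ))) K, ← Real.rpow_mul (hz i),
      one_div, inv_mul_cancel₀ hK0, Real.rpow_one]
  calc ∏ i, z i = (∏ i, z i ^ (1 / (K : ℝ))) ^ K := hlhs.symm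
    _ ≤ (∑ i, (1 / (K : ℝ)) * z i) ^ K := by
        apply pow_le_pow_left₀ (Finset.prod_nonneg fun i _ => Real.rpow_nonneg (hz i) _) hgm
    _ = ((∑ i, z i) / K) ^ K := by
        rw [← Finset.mul_sum]
        ring_nf

private lemma amgm_multiset (u : Multiset ℝ) (hu : ∀ x ∈ u, 0 ≤ x) (hc : 0 < u.card) :
    u.prod ≤ (u.sum / u.card) ^ u.card := by
  set l := u.toList with hl
  have hlen : l.length = u.card := Multiset.length_toList u
  have hz : ∀ i : Fin l.length, 0 ≤ l.get i := by
    intro i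
    apply hu
    rw [← Multiset.mem_toList]
    exact List.get_mem l i
  have h := amgm_fin l.length (by omega) (fun i => l.get i) hz
  have hp : ∏ i, l.get i = u.prod := by
    rw [← List.prod_ofFn, List.ofFn_get, hl, Multiset.prod_toList]
  have hs : ∑ i, l.get i = u.sum := by
    rw [← List.sum_ofFn, List.ofFn_get, hl, Multiset.sum_toList]
  rw [hp, hs, hlen] at h
  exact h

open Polynomial in
private lemma coeff0_prod (M : Multiset ℝ) :
    ((M.map (fun w => X + C w)).prod).coeff 0 = M.prod := by
  rw [Polynomial.coeff_zero_eq_eval_zero, Polynomial.eval_multiset_prod, Multiset.map_map]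
  rw [show ((eval (0:ℝ)) ∘ fun w : ℝ => X + C w) = id from funext fun w => by simp,
    Multiset.map_id]

open Polynomial in
private lemma coeff1_prod (M : Multiset ℝ) (hM : ∀ w ∈ M, w ≠ 0) :
    ((M.map (fun w => X + C w)).prod).coeff 1
      = M.prod * (M.map (fun w => w⁻¹)).sum := by
  induction M using Multiset.induction_on with
  | empty => simp [Polynomial.coeff_one]
  | cons a M ih =>
    have ha : a ≠ 0 := hM a (Multiset.mem_cons_self a M)
    have ihs := ih (fun w hw => hM w (Multiset.mem_cons_of_mem hw))
    rw [Multiset.map_cons, Multiset.prod_cons]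
    have hco : ((X + C a) * ((M.map (fun w => X + C w)).prod)).coeff 1
        = ((M.map (fun w => X + C w)).prod).coeff 0
          + a * ((M.map (fun w => X + C w)).prod).coeff 1 := by
      rw [add_mul, Polynomial.coeff_add, Polynomial.coeff_X_mul, Polynomial.coeff_C_mul]
    rw [hco, ihs, coeff0_prod, Multiset.map_cons, Multiset.sum_cons, Multiset.prod_cons]
    field_simp

open Polynomial in
private lemma uni (k : ℕ) (f : Polynomial ℝ) (hdeg : f.natDegree ≤ k + 1)
    (hc : ∀ j, 0 ≤ f.coeff j)
    (hrr : f = 0 ∨ ∀ ρ ∈ (f.map (algebraMap ℝ ℂ)).roots, ρ.im = 0)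
    (L : ℝ) (hL : ∀ t : ℝ, 0 < t → L * t ≤ f.eval t) :
    L * ((k : ℝ) / (k + 1)) ^ k ≤ f.coeff 1 := by
  have hgno : (0:ℝ) ≤ ((k : ℝ) / (k + 1)) ^ k := by positivity
  have hgle1 : ((k : ℝ) / (k + 1)) ^ k ≤ 1 := by
    apply pow_le_one₀ (by positivity)
    rw [div_le_one (by positivity)]
    linarith
  rcases le_or_gt L 0 with hL0 | hLpos
  · have h1 : L * ((k : ℝ) / (k + 1)) ^ k ≤ 0 := mul_nonpos_of_nonpos_of_nonneg hL0 hgno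
    linarith [hc 1]
  have hf0 : f ≠ 0 := by
    intro h
    have h1 := hL 1 one_pos
    rw [h] at h1
    simp at h1
    linarith
  have hrr2 := hrr.resolve_left hf0
  have hinj : Function.Injective (algebraMap ℝ ℂ) := fun a b hab => by exact_mod_cast hab
  set fc := f.map (algebraMap ℝ ℂ) with hfc
  have hfc0 : fc ≠ 0 := by
    intro h
    apply hf0
    apply Polynomial.map_injective _ hinj
    rw [← hfc, h, Polynomial.map_zero]
  have hndeq : fc.natDegree = f.natDegree := Polynomial.natDegree_map_eq_of_injective hinj f
  have hsplit : fc.roots.card = fc.natDegree :=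
    (Polynomial.splits_iff_card_roots).mp (IsAlgClosed.splits fc)
  have hfacC := Polynomial.C_leadingCoeff_mul_prod_multiset_X_sub_C hsplit
  set M : Multiset ℝ := fc.roots.map (fun ρ => -ρ.re) with hM
  have hevreal : ∀ r : ℝ, fc.eval ((r : ℝ) : ℂ) = ((f.eval r : ℝ) : ℂ) := by
    intro r
    rw [hfc, Polynomial.eval_map]
    exact Polynomial.eval₂_at_apply (algebraMap ℝ ℂ) r
  have hMnn : ∀ w ∈ M, 0 ≤ w := by
    intro w hw
    rw [hM] at hw
    obtain ⟨ρ, hρ, rfl⟩ := Multiset.mem_map.mp hw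
    have him := hrr2 ρ hρ
    have hroot : fc.eval ρ = 0 := (Polynomial.mem_roots hfc0).mp hρ
    have hρre : ρ = ((ρ.re : ℝ) : ℂ) := by
      apply Complex.ext <;> simp [him]
    by_contra hneg
    push_neg at hneg
    have hpos : 0 < ρ.re := by linarith
    have hevz : f.eval ρ.re = 0 := by
      rw [hρre, hevreal] at hroot
      exact_mod_cast hroot
    have h4 := hL ρ.re hpos
    rw [hevz] at h4
    nlinarith
  set a := f.leadingCoeff with ha
  have ha0 : a ≠ 0 := Polynomial.leadingCoeff_ne_zero.mpr hf0
  have hapos : 0 < a := lt_of_le_of_ne (hc _) (Ne.symm ha0)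
  have hlcmap : fc.leadingCoeff = ((a : ℝ) : ℂ) := Polynomial.leadingCoeff_map_of_injective hinj f
  have hfacR : f = Polynomial.C a * (M.map (fun w => X + C w)).prod := by
    apply Polynomial.map_injective _ hinj
    rw [Polynomial.map_mul, Polynomial.map_C, Polynomial.map_multiset_prod, ← hfc, ← hfacC]
    congr 1
    · rw [hlcmap]
      norm_cast
    · rw [hM, Multiset.map_map, Multiset.map_map]
      apply congrArg
      apply Multiset.map_congr rfl
      intro ρ hρ
      have him := hrr2 ρ hρ
      simp only [Function.comp_apply, Polynomial.map_add, Polynomial.map_X, Polynomial.map_C]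
      have hre : ((algebraMap ℝ ℂ) (-ρ.re)) = -ρ := by
        apply Complex.ext <;> simp [him]
      rw [hre, sub_eq_add_neg, map_neg]
  have hcard : M.card = f.natDegree := by
    rw [hM, Multiset.card_map, hsplit, hndeq]
  have heval : ∀ t : ℝ, f.eval t = a * (M.map (fun w => t + w)).prod := by
    intro t
    conv_lhs => rw [hfacR]
    rw [Polynomial.eval_mul, Polynomial.eval_C, Polynomial.eval_multiset_prod,
      Multiset.map_map]
    congr 2
    apply Multiset.map_congr rfl
    intro w _
    simp
  by_cases hzero : (0:ℝ) ∈ M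
  · -- zero root case
    set M' := M.erase 0 with hM'
    have hMsplit : M = 0 ::ₘ M' := (Multiset.cons_erase hzero).symm
    set h : Polynomial ℝ := Polynomial.C a * (M'.map (fun w => X + C w)).prod with hh
    have hfXh : f = X * h := by
      rw [hfacR, hMsplit, Multiset.map_cons, Multiset.prod_cons]
      rw [show (X + C (0:ℝ)) = X by simp]
      rw [hh]
      ring
    have hcoeff1 : f.coeff 1 = h.coeff 0 := by rw [hfXh, Polynomial.coeff_X_mul]
    have hch : ∀ t : ℝ, 0 < t → L ≤ h.eval t := by
      intro t ht
      have h1 := hL t ht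
      rw [hfXh, Polynomial.eval_mul, Polynomial.eval_X] at h1
      have h2 : L * t ≤ h.eval t * t := by linarith
      exact le_of_mul_le_mul_right h2 ht
    have hlim : L ≤ h.eval 0 := by
      have htd : Filter.Tendsto (fun t : ℝ => h.eval t) (nhdsWithin 0 (Set.Ioi 0))
          (nhds (h.eval 0)) :=
        (h.continuous.tendsto 0).mono_left nhdsWithin_le_nhds
      apply ge_of_tendsto htd
      filter_upwards [self_mem_nhdsWithin] with t ht
      exact hch t ht
    rw [hcoeff1, Polynomial.coeff_zero_eq_eval_zero]
    nlinarith
  · -- all roots strictly negative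
    have hMpos : ∀ w ∈ M, 0 < w :=
      fun w hw => lt_of_le_of_ne (hMnn w hw) (fun h => hzero (h ▸ hw))
    set P := M.prod with hP
    set S := (M.map (fun w => w⁻¹)).sum with hS
    have hPpos : 0 < P := multiset_prod_pos M hMpos
    have hcoeff1 : f.coeff 1 = a * (P * S) := by
      rw [hfacR, Polynomial.coeff_C_mul, coeff1_prod M (fun w hw => (hMpos w hw).ne')]
    have hdne : M ≠ 0 := by
      intro h0
      have hfa : f.eval ((a+1)/L) = a := by
        rw [heval, h0]
        simp
      have h2 := hL ((a+1)/L) (by positivity)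
      rw [hfa] at h2
      have h3 : L * ((a+1)/L) = a + 1 := by field_simp
      linarith [h3 ▸ h2]
    have hSpos : 0 < S := by
      apply multiset_sum_pos
      · intro x hx
        obtain ⟨w, hw, rfl⟩ := Multiset.mem_map.mp hx
        exact inv_pos.mpr (hMpos w hw)
      · intro h0
        exact hdne (Multiset.map_eq_zero.mp h0)
    have hdlek : M.card ≤ k + 1 := by
      rw [hcard]
      exact hdeg
    rcases Nat.eq_zero_or_pos k with hk0 | hkpos
    · subst hk0
      have hcard1 : M.card = 1 := by
        have h1 : 0 < M.card := Multiset.card_pos.mpr hdne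
        omega
      obtain ⟨w, hMw⟩ := Multiset.card_eq_one.mp hcard1
      have hw : 0 < w := hMpos w (by rw [hMw]; exact Multiset.mem_singleton_self w)
      have hc1 : f.coeff 1 = a := by
        rw [hcoeff1, hP, hS, hMw, Multiset.prod_singleton, Multiset.map_singleton,
          Multiset.sum_singleton]
        field_simp
      have hg0 : ((((0:ℕ):ℝ)) / (((0:ℕ):ℝ) + 1)) ^ (0:ℕ) = 1 := pow_zero _
      rw [hg0, mul_one, hc1]
      by_contra hcon
      push_neg at hcon
      have hLa : 0 < L - a := by linarith
      have hnum : 0 < a * w + 1 := by nlinarith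
      set t := (a * w + 1) / (L - a) with htdef
      have ht : 0 < t := div_pos hnum hLa
      have h2 := hL t ht
      rw [heval t, hMw, Multiset.map_singleton, Multiset.prod_singleton] at h2
      have h3 : (L - a) * t = a * w + 1 := by
        rw [htdef]
        field_simp
      nlinarith
    · set t0 := (((k:ℝ)) + 1) / ((k:ℝ) * S) with ht0
      have hkR : (0:ℝ) < k := by exact_mod_cast hkpos
      have ht0pos : 0 < t0 := div_pos (by linarith) (by positivity)
      set v := M.map (fun w => 1 + t0 * w⁻¹) with hv
      set u := v + Multiset.replicate (k + 1 - M.card) 1 with huu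
      have hucard : u.card = k + 1 := by
        rw [huu, Multiset.card_add, Multiset.card_replicate, hv, Multiset.card_map]
        omega
      have hunn : ∀ x ∈ u, 0 ≤ x := by
        intro x hx
        rw [huu, Multiset.mem_add] at hx
        rcases hx with hx | hx
        · rw [hv] at hx
          obtain ⟨w, hw, rfl⟩ := Multiset.mem_map.mp hx
          have h1 := hMpos w hw
          have h2 : 0 < w⁻¹ := inv_pos.mpr h1
          nlinarith
        · rw [Multiset.eq_of_mem_replicate hx]
          norm_num
      have hvsum : v.sum = M.card + t0 * S := by
        rw [hv]
        rw [show (fun w : ℝ => 1 + t0 * w⁻¹)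
            = (fun w : ℝ => (fun _ : ℝ => (1:ℝ)) w + (fun w : ℝ => t0 * w⁻¹) w) from rfl,
          Multiset.sum_map_add]
        congr 1
        · rw [Multiset.map_const', Multiset.sum_replicate]
          simp
        · rw [hS, ← Multiset.sum_map_mul_left]
      have husum : u.sum = ((k:ℝ) + 1) + t0 * S := by
        rw [huu, Multiset.sum_add, Multiset.sum_replicate, hvsum, nsmul_eq_mul, mul_one,
          Nat.cast_sub hdlek]
        push_cast
        ring
      have huprod : u.prod = v.prod := by
        rw [huu, Multiset.prod_add, Multiset.prod_replicate, one_pow, mul_one]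
      have hamgm := amgm_multiset u hunn (by rw [hucard]; omega)
      rw [hucard, husum, huprod] at hamgm
      have ht0S : t0 * S = ((k:ℝ) + 1) / (k:ℝ) := by
        rw [ht0]
        field_simp
      rw [ht0S] at hamgm
      push_cast at hamgm
      have hbase : ((k:ℝ) + 1 + ((k:ℝ) + 1)/(k:ℝ))/((k:ℝ) + 1) = ((k:ℝ) + 1)/(k:ℝ) := by
        rw [div_eq_div_iff (by linarith) hkR.ne']
        field_simp
      rw [hbase] at hamgm
      have hev : f.eval t0 = a * (P * v.prod) := by
        rw [heval]
        have hPv : P * v.prod = (M.map (fun w => w * (1 + t0 * w⁻¹))).prod := by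
          rw [Multiset.prod_map_mul, Multiset.map_id', hP, hv]
        rw [hPv]
        apply congrArg
        apply congrArg
        apply Multiset.map_congr rfl
        intro w hw
        have hw0 := (hMpos w hw).ne'
        field_simp
        ring
      have hl2 := hL t0 ht0pos
      rw [hev] at hl2
      have hfin : L * t0 ≤ a * (P * (((k:ℝ) + 1)/(k:ℝ)) ^ (k+1)) := by
        refine le_trans hl2 ?_
        exact mul_le_mul_of_nonneg_left
          (mul_le_mul_of_nonneg_left hamgm hPpos.le) hapos.le
      rw [hcoeff1]
      set g := ((k:ℝ)/((k:ℝ) + 1)) ^ k with hg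
      have hid : (((k:ℝ) + 1)/(k:ℝ)) ^ (k+1) * g = ((k:ℝ) + 1)/(k:ℝ) := by
        rw [hg, pow_succ]
        have hbase1 : ((k:ℝ) + 1)/(k:ℝ) * ((k:ℝ)/((k:ℝ) + 1)) = 1 := by
          field_simp
        calc (((k:ℝ) + 1)/(k:ℝ)) ^ k * (((k:ℝ) + 1)/(k:ℝ)) * ((k:ℝ)/((k:ℝ) + 1)) ^ k
            = ((((k:ℝ) + 1)/(k:ℝ)) * ((k:ℝ)/((k:ℝ) + 1))) ^ k * (((k:ℝ) + 1)/(k:ℝ)) := by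
              rw [mul_pow]
              ring
          _ = ((k:ℝ) + 1)/(k:ℝ) := by rw [hbase1, one_pow, one_mul]
      have ht0inv : t0 * (((k:ℝ) * S)/((k:ℝ) + 1)) = 1 := by
        rw [ht0]
        field_simp
      have hquot : (0:ℝ) ≤ ((k:ℝ) * S)/((k:ℝ) + 1) :=
        div_nonneg (mul_nonneg hkR.le hSpos.le) (by linarith)
      calc L * g = L * g * (t0 * (((k:ℝ) * S)/((k:ℝ) + 1))) := by rw [ht0inv, mul_one]
        _ = ((L * t0) * g) * (((k:ℝ) * S)/((k:ℝ) + 1)) := by ring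
        _ ≤ ((a * (P * (((k:ℝ) + 1)/(k:ℝ)) ^ (k+1))) * g) * (((k:ℝ) * S)/((k:ℝ) + 1)) := by
            exact mul_le_mul_of_nonneg_right (mul_le_mul_of_nonneg_right hfin hgno) hquot
        _ = (a * P * ((((k:ℝ) + 1)/(k:ℝ)) ^ (k+1) * g)) * (((k:ℝ) * S)/((k:ℝ) + 1)) := by
            ring
        _ = (a * P * (((k:ℝ) + 1)/(k:ℝ))) * (((k:ℝ) * S)/((k:ℝ) + 1)) := by rw [hid]
        _ = a * (P * S) := by
            field_simp

open Polynomial MvPolynomial in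
private lemma gurvits_key : ∀ (k : ℕ) (q : MvPolynomial (Fin k) ℝ), q.totalDegree ≤ k →
    (∀ m, 0 ≤ q.coeff m) →
    (q = 0 ∨ ∀ z : Fin k → ℂ, (∀ j, 0 < (z j).im) → MvPolynomial.aeval z q ≠ 0) →
    sInf ((fun x : Fin k → ℝ => MvPolynomial.eval x q / ∏ j, x j) '' {x | ∀ j, 0 < x j})
        * ((k.factorial : ℝ) / (k : ℝ) ^ k)
      ≤ q.coeff (Finsupp.equivFunOnFinite.symm fun _ => 1) := by
  intro k
  induction k with
  | zero =>
    intro q _ _ _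
    have hm0 : (Finsupp.equivFunOnFinite.symm fun _ => (1:ℕ) : Fin 0 →₀ ℕ) = 0 :=
      Finsupp.ext (fun a => Fin.elim0 a)
    have hqC : q = MvPolynomial.C (q.coeff 0) := by
      apply MvPolynomial.ext
      intro m
      have hm : m = 0 := Finsupp.ext (fun a => Fin.elim0 a)
      rw [hm, MvPolynomial.coeff_C]
      simp
    have himg : ((fun x : Fin 0 → ℝ => MvPolynomial.eval x q / ∏ j, x j) ''
        {x | ∀ j, 0 < x j}) = {q.coeff 0} := by
      ext y
      simp only [Set.mem_image, Set.mem_setOf_eq, Set.mem_singleton_iff]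
      constructor
      · rintro ⟨x, _, rfl⟩
        rw [hqC]
        simp
      · intro hy
        refine ⟨fun _ => 1, fun j => Fin.elim0 j, ?_⟩
        rw [hqC]
        simp [hy]
    rw [himg, csInf_singleton, hm0]
    simp
  | succ k ih =>
    intro q hdeg hcoeffs hstz
    -- basic facts about the capacity set
    have hSne : ((fun x : Fin (k+1) → ℝ => MvPolynomial.eval x q / ∏ j, x j) ''
        {x | ∀ j, 0 < x j}).Nonempty := by
      exact ⟨_, ⟨fun _ => 1, fun j => one_pos, rfl⟩⟩
    have hSbdd : BddBelow ((fun x : Fin (k+1) → ℝ => MvPolynomial.eval x q / ∏ j, x j) ''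
        {x | ∀ j, 0 < x j}) := by
      refine ⟨0, ?_⟩
      rintro y ⟨x, hx, rfl⟩
      have h1 : 0 ≤ MvPolynomial.eval x q := mv_eval_nonneg q hcoeffs x (fun j => (hx j).le)
      have h2 : 0 < ∏ j, x j := Finset.prod_pos (fun j _ => hx j)
      positivity
    set Cap := sInf ((fun x : Fin (k+1) → ℝ => MvPolynomial.eval x q / ∏ j, x j) ''
        {x | ∀ j, 0 < x j}) with hCap
    have hCap0 : 0 ≤ Cap := by
      apply le_csInf hSne
      rintro y ⟨x, hx, rfl⟩
      have h1 : 0 ≤ MvPolynomial.eval x q := mv_eval_nonneg q hcoeffs x (fun j => (hx j).le)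
      have h2 : 0 < ∏ j, x j := Finset.prod_pos (fun j _ => hx j)
      positivity
    rcases hstz with rfl | hst
    · have himg : ((fun x : Fin (k+1) → ℝ =>
          MvPolynomial.eval x (0 : MvPolynomial (Fin (k+1)) ℝ) / ∏ j, x j) ''
          {x | ∀ j, 0 < x j}) = {0} := by
        ext y
        simp only [Set.mem_image, Set.mem_setOf_eq, Set.mem_singleton_iff]
        constructor
        · rintro ⟨x, _, rfl⟩
          simp
        · intro hy
          exact ⟨fun _ => 1, fun j => one_pos, by simp [hy]⟩
      rw [hCap, himg, csInf_singleton]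
      simp
    -- the derived polynomial
    set q' := (finSuccEquiv ℝ k q).coeff 1 with hq'
    have hq'td : q'.totalDegree ≤ k := by
      rcases eq_or_ne q' 0 with h0 | h0
      · rw [h0, MvPolynomial.totalDegree_zero]
        exact Nat.zero_le _
      · rw [hq']
        have := MvPolynomial.totalDegree_coeff_finSuccEquiv_add_le q 1 (by rw [← hq']; exact h0)
        omega
    have hq'coeffs : ∀ m, 0 ≤ q'.coeff m := by
      intro m
      rw [hq', finSuccEquiv_coeff_coeff]
      exact hcoeffs _
    have hq'stz := coeff_one_stable q hst
    rw [← hq'] at hq'stz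
    -- coefficient identity
    have hmcons : (Finsupp.cons 1 (Finsupp.equivFunOnFinite.symm fun _ => (1:ℕ)) :
        Fin (k+1) →₀ ℕ) = Finsupp.equivFunOnFinite.symm fun _ => (1:ℕ) := by
      apply Finsupp.ext
      intro j
      refine Fin.cases ?_ ?_ j
      · rw [Finsupp.cons_zero]
        rfl
      · intro i
        rw [Finsupp.cons_succ]
        rfl
    have hcoeff_eq : q'.coeff (Finsupp.equivFunOnFinite.symm fun _ => 1)
        = q.coeff (Finsupp.equivFunOnFinite.symm fun _ => 1) := by
      rw [hq', finSuccEquiv_coeff_coeff, hmcons]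
    -- capacity chain
    have hchain : ∀ x : Fin k → ℝ, (∀ j, 0 < x j) →
        (Cap * ∏ j, x j) * ((k : ℝ) / (k + 1)) ^ k ≤ MvPolynomial.eval x q' := by
      intro x hx
      set f := (finSuccEquiv ℝ k q).map (MvPolynomial.eval x) with hf
      have hfd : f.natDegree ≤ k + 1 := by
        refine le_trans Polynomial.natDegree_map_le (le_trans ?_ hdeg)
        rw [natDegree_finSuccEquiv]
        exact degreeOf_le_totalDegree q 0
      have hfc : ∀ j, 0 ≤ f.coeff j := by
        intro j
        rw [hf, Polynomial.coeff_map]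
        apply mv_eval_nonneg _ _ x (fun j => (hx j).le)
        intro m
        rw [finSuccEquiv_coeff_coeff]
        exact hcoeffs _
      have hrr := restriction_realrooted q hst x hx
      have hprodpos : 0 < ∏ j, x j := Finset.prod_pos (fun j _ => hx j)
      have hLf : ∀ t : ℝ, 0 < t → (Cap * ∏ j, x j) * t ≤ f.eval t := by
        intro t ht
        have hev : f.eval t = MvPolynomial.eval (Fin.cons t x) q := by
          rw [hf, ← MvPolynomial.eval_eq_eval_mv_eval']
        have hmem : MvPolynomial.eval (Fin.cons t x) q / ∏ j, (Fin.cons t x : Fin (k+1) → ℝ) j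
            ∈ ((fun x : Fin (k+1) → ℝ => MvPolynomial.eval x q / ∏ j, x j) ''
              {x | ∀ j, 0 < x j}) := ⟨Fin.cons t x, fun j => by
            refine Fin.cases ?_ ?_ j
            · exact ht
            · intro i
              simpa using hx i, rfl⟩
        have hle := csInf_le hSbdd hmem
        rw [← hCap] at hle
        have hprodc : ∏ j, (Fin.cons t x : Fin (k+1) → ℝ) j = t * ∏ j, x j := by
          rw [Fin.prod_univ_succ]
          simp
        rw [hprodc] at hle
        have htprod : 0 < t * ∏ j, x j := mul_pos ht hprodpos
        have := (le_div_iff₀ htprod).mp hle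
        rw [hev]
        nlinarith
      have huni := uni k f hfd hfc hrr (Cap * ∏ j, x j) hLf
      have hfcoeff1 : f.coeff 1 = MvPolynomial.eval x q' := by
        rw [hf, Polynomial.coeff_map, hq']
      rw [← hfcoeff1]
      exact huni
    -- capacity of q'
    have hS'ne : ((fun x : Fin k → ℝ => MvPolynomial.eval x q' / ∏ j, x j) ''
        {x | ∀ j, 0 < x j}).Nonempty :=
      ⟨_, ⟨fun _ => 1, fun j => one_pos, rfl⟩⟩
    have hCap' : Cap * ((k : ℝ) / (k + 1)) ^ k
        ≤ sInf ((fun x : Fin k → ℝ => MvPolynomial.eval x q' / ∏ j, x j) ''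
          {x | ∀ j, 0 < x j}) := by
      apply le_csInf hS'ne
      rintro y ⟨x, hx, rfl⟩
      have h1 := hchain x hx
      have hprodpos : 0 < ∏ j, x j := Finset.prod_pos (fun j _ => hx j)
      rw [le_div_iff₀ hprodpos]
      nlinarith
    have hih := ih q' hq'td hq'coeffs hq'stz
    rw [hcoeff_eq] at hih
    -- final arithmetic
    have hident : (((k+1).factorial : ℝ)) / ((k+1 : ℕ) : ℝ) ^ (k + 1)
        = ((k : ℝ) / ((k : ℝ) + 1)) ^ k * ((k.factorial : ℝ) / (k : ℝ) ^ k) := by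
      rcases Nat.eq_zero_or_pos k with rfl | hk
      · norm_num
      · have hkR : (0:ℝ) < k := by exact_mod_cast hk
        rw [Nat.factorial_succ, div_pow, pow_succ]
        push_cast
        have hk1 : ((k:ℝ) + 1) ≠ 0 := by linarith
        field_simp
    have hfactnn : (0:ℝ) ≤ (k.factorial : ℝ) / (k : ℝ) ^ k := by positivity
    calc Cap * (((k+1).factorial : ℝ) / ((k+1 : ℕ) : ℝ) ^ (k + 1))
        = (Cap * ((k : ℝ) / ((k : ℝ) + 1)) ^ k) * ((k.factorial : ℝ) / (k : ℝ) ^ k) := by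
          rw [hident]
          ring
      _ ≤ sInf ((fun x : Fin k → ℝ => MvPolynomial.eval x q' / ∏ j, x j) ''
            {x | ∀ j, 0 < x j}) * ((k.factorial : ℝ) / (k : ℝ) ^ k) := by
          apply mul_le_mul_of_nonneg_right ?_ hfactnn
          convert hCap' using 2
      _ ≤ q.coeff (Finsupp.equivFunOnFinite.symm fun _ => 1) := hih

/-- **Gurvits' capacity theorem.**
Let `p` be a stable homogeneous polynomial of degree `n` in `n` variables with
nonnegative real coefficients, and let
`Cap(p) := inf { p(x)/(x_1⋯x_n) : all x_j > 0 }`.  Then the coefficient of the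
monomial `x_1⋯x_n` in `p` is at least `Cap(p) · n!/nⁿ`. -/
theorem stmt18 (n : ℕ) (p : MvPolynomial (Fin n) ℝ) (hp : p.IsHomogeneous n)
    (hcoeff : ∀ m, 0 ≤ p.coeff m)
    (hstab : ∀ z : Fin n → ℂ, (∀ j, 0 < (z j).im) → MvPolynomial.aeval z p ≠ 0) :
    sInf ((fun x : Fin n → ℝ => MvPolynomial.eval x p / ∏ j, x j) ''
          {x | ∀ j, 0 < x j}) *
        ((n.factorial : ℝ) / (n : ℝ) ^ n) ≤
      p.coeff (Finsupp.equivFunOnFinite.symm fun _ => 1) :=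
  gurvits_key n p hp.totalDegree_le hcoeff (Or.inr hstab)
end
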